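/- arXiv:1608.03177 — 6 statements merged into one kernel-verified Lean document; each statement's English description precedes it below -/
import Mathlib

section
/- Suppose the fixed set F = F_E ∪ F_N contains no matching of size 3 and there exist at least two distinct F-fixed realisations of the bipartite degree sequence S. Then every F-fixed realisation G of S admits a 4-swap: there exists an F-fixed realisation G' of S with |E(G) △ E(G')| = 4. -/
/-- `E ⊆ V × U` is a realisation of the bipartite degree sequence `(a, b)`:
vertex `i` of the first part has degree `a i`, vertex `j` of the second part degree `b j`. -/
def IsRealisation {n n' : ℕ} (a : Fin n → ℕ) (b : Fin n' → ℕ)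
    (E : Finset (Fin n × Fin n')) : Prop :=
  (∀ i : Fin n, (E.filter fun p => p.1 = i).card = a i) ∧
  (∀ j : Fin n', (E.filter fun p => p.2 = j).card = b j)

/-- An `F`-fixed realisation: a realisation containing all fixed edges `FE`
and none of the fixed non-edges `FN`. -/
def IsFFixedRealisation {n n' : ℕ} (a : Fin n → ℕ) (b : Fin n' → ℕ)
    (FE FN E : Finset (Fin n × Fin n')) : Prop :=
  IsRealisation a b E ∧ FE ⊆ E ∧ FN ∩ E = ∅

/-- `F` contains a matching of size 3: three pairs with pairwise distinct first
coordinates and pairwise distinct second coordinates. -/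
def HasMatchingThree {n n' : ℕ} (F : Finset (Fin n × Fin n')) : Prop :=
  ∃ p₁ p₂ p₃ : Fin n × Fin n', p₁ ∈ F ∧ p₂ ∈ F ∧ p₃ ∈ F ∧
    p₁.1 ≠ p₂.1 ∧ p₁.1 ≠ p₃.1 ∧ p₂.1 ≠ p₃.1 ∧
    p₁.2 ≠ p₂.2 ∧ p₁.2 ≠ p₃.2 ∧ p₂.2 ≠ p₃.2

def GoodWalk {n n' : ℕ} (G FE FN : Finset (Fin n × Fin n')) (k : ℕ)
    (v : ℕ → Fin n) (u : ℕ → Fin n') : Prop :=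
  0 < k ∧ ∀ i < k, ((v i, u i) ∈ G ∧ (v i, u i) ∉ FE) ∧
    ((v ((i + 1) % k), u i) ∉ G ∧ (v ((i + 1) % k), u i) ∉ FN)

namespace GoodWalk
variable {n n' : ℕ} {G FE FN : Finset (Fin n × Fin n')} {k : ℕ}
  {v : ℕ → Fin n} {u : ℕ → Fin n'}

lemma not_one {v : ℕ → Fin n} {u : ℕ → Fin n'} : ¬ GoodWalk G FE FN 1 v u := by
  rintro ⟨-, h⟩
  obtain ⟨⟨h1, -⟩, h2, -⟩ := h 0 one_pos
  exact h2 h1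

lemma rotate (h : GoodWalk G FE FN k v u) (r : ℕ) :
    GoodWalk G FE FN k (fun i => v ((i + r) % k)) (fun i => u ((i + r) % k)) := by
  obtain ⟨hk, h⟩ := h
  refine ⟨hk, fun i hi => ?_⟩
  have hlt : (i + r) % k < k := Nat.mod_lt _ hk
  have h1 : ((i + 1) % k + r) % k = ((i + r) % k + 1) % k := by
    rw [Nat.mod_add_mod, Nat.mod_add_mod]
    congr 1
    omega
  simp only [h1]
  exact h _ hlt

/-- if the `v`-vertices repeat, there is a shorter walk -/
lemma of_v_eq (h : GoodWalk G FE FN k v u) {i j : ℕ} (hij : i < j) (hjk : j < k)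
    (hv : v i = v j) :
    GoodWalk G FE FN (j - i) (fun t => v (i + t % (j - i))) (fun t => u (i + t % (j - i))) := by
  obtain ⟨hk, h⟩ := h
  refine ⟨by omega, fun t ht => ?_⟩
  have htm : t % (j - i) = t := Nat.mod_eq_of_lt ht
  have h1 : i + t < k := by omega
  have h2 : (i + t + 1) % k = i + t + 1 := Nat.mod_eq_of_lt (by omega)
  obtain ⟨he, hne⟩ := h (i + t) h1
  rw [h2] at hne
  simp only [htm]
  refine ⟨he, ?_⟩
  by_cases hc : t + 1 < j - i
  · have h4 : (t + 1) % (j - i) = t + 1 := Nat.mod_eq_of_lt hc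
    simp only [Nat.mod_mod, h4]
    exact hne
  · have h4 : (t + 1) % (j - i) = 0 := by
      have : t + 1 = j - i := by omega
      simp [this]
    simp only [Nat.mod_mod, h4]
    have : i + t + 1 = j := by omega
    rw [this] at hne
    simpa [hv] using hne

/-- if the `u`-vertices repeat, there is a shorter walk -/
lemma of_u_eq (h : GoodWalk G FE FN k v u) {i j : ℕ} (hij : i < j) (hjk : j < k)
    (hu : u i = u j) :
    GoodWalk G FE FN (j - i) (fun t => v (i + 1 + t % (j - i)))
      (fun t => u (i + 1 + t % (j - i))) := by
  obtain ⟨hk, h⟩ := h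
  refine ⟨by omega, fun t ht => ?_⟩
  have htm : t % (j - i) = t := Nat.mod_eq_of_lt ht
  have h1 : i + 1 + t < k := by omega
  obtain ⟨he, hne⟩ := h (i + 1 + t) h1
  simp only [htm]
  refine ⟨he, ?_⟩
  by_cases hc : t + 1 < j - i
  · have hm : (t + 1) % (j - i) = t + 1 := Nat.mod_eq_of_lt hc
    have h2 : (i + 1 + t + 1) % k = i + 1 + (t + 1) := by
      rw [Nat.mod_eq_of_lt (by omega)]; omega
    rw [h2] at hne
    simp only [Nat.mod_mod, hm]
    exact hne
  · have hm : (t + 1) % (j - i) = 0 := by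
      have : t + 1 = j - i := by omega
      simp [this]
    simp only [Nat.mod_mod, hm]
    -- need (v (i+1), u (i+1+t)) ∉ G ∧ ∉ FN ; i+1+t = j, u j = u i, use cond at i
    have hj : i + 1 + t = j := by omega
    obtain ⟨-, hni⟩ := h i (by omega)
    have h3 : (i + 1) % k = i + 1 := Nat.mod_eq_of_lt (by omega)
    rw [h3] at hni
    simpa [hj, ← hu] using hni

/-- shortening at a chord `(v 0, u 1) ∈ G \ FE` when `k ≥ 3`. -/
lemma shorten (h : GoodWalk G FE FN k v u) (hk3 : 3 ≤ k)
    (hc : (v 0, u 1) ∈ G) (hce : (v 0, u 1) ∉ FE) :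
    GoodWalk G FE FN (k - 1)
      (fun t => if t % (k - 1) = 0 then v 0 else v (t % (k - 1) + 1))
      (fun t => u (t % (k - 1) + 1)) := by
  obtain ⟨hk, h⟩ := h
  refine ⟨by omega, fun t ht => ?_⟩
  have htm : t % (k - 1) = t := Nat.mod_eq_of_lt ht
  simp only [htm]
  constructor
  · by_cases h0 : t = 0
    · simp [h0, hc, hce]
    · have hlt : t + 1 < k := by omega
      obtain ⟨he, -⟩ := h (t + 1) hlt
      simp [h0, he]
  · by_cases hc2 : t + 1 < k - 1
    · have hm : (t + 1) % (k - 1) = t + 1 := Nat.mod_eq_of_lt hc2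
      obtain ⟨-, hne⟩ := h (t + 1) (by omega)
      have h2 : (t + 1 + 1) % k = t + 2 := Nat.mod_eq_of_lt (by omega)
      rw [h2] at hne
      simp only [hm]
      have : ¬ (t + 1 = 0) := by omega
      simpa [this, show t + 1 + 1 = t + 2 from rfl] using hne
    · have hm : (t + 1) % (k - 1) = 0 := by
        have : t + 1 = k - 1 := by omega
        simp [this]
      rw [hm]
      obtain ⟨-, hne⟩ := h (k - 1) (by omega)
      have h2 : (k - 1 + 1) % k = 0 := by
        have : k - 1 + 1 = k := by omega
        simp [this]
      rw [h2] at hne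
      have : t + 1 = k - 1 := by omega
      simp only [if_pos rfl, this]
      exact hne

/-- a 2-walk from a chord `(v 0, u 1) ∉ G, ∉ FN` when `k ≥ 2`. -/
lemma two_of_chord (h : GoodWalk G FE FN k v u) (hk2 : 2 ≤ k)
    (hc : (v 0, u 1) ∉ G) (hcn : (v 0, u 1) ∉ FN) :
    GoodWalk G FE FN 2 (fun t => v (t % 2)) (fun t => u (t % 2)) := by
  obtain ⟨hk, h⟩ := h
  refine ⟨by omega, fun t ht => ?_⟩
  interval_cases t
  · obtain ⟨he, hne⟩ := h 0 (by omega)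
    have h1 : (0 + 1) % k = 1 := Nat.mod_eq_of_lt (by omega)
    rw [h1] at hne
    simpa using ⟨he, hne⟩
  · obtain ⟨he, -⟩ := h 1 (by omega)
    simpa using ⟨he, hc, hcn⟩

end GoodWalk


lemma col_swap {n n' : ℕ} {a : Fin n → ℕ} {b : Fin n' → ℕ}
    {G H : Finset (Fin n × Fin n')} (hG : IsRealisation a b G) (hH : IsRealisation a b H)
    {p : Fin n × Fin n'} (hp : p ∈ G \ H) : ∃ v', (v', p.2) ∈ H \ G := by
  classical
  set A := G.filter (fun q => q.2 = p.2) with hA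
  set B := H.filter (fun q => q.2 = p.2) with hB
  have hpA : p ∈ A := Finset.mem_filter.mpr ⟨(Finset.mem_sdiff.mp hp).1, rfl⟩
  have hpB : p ∉ B := fun h => (Finset.mem_sdiff.mp hp).2 (Finset.mem_filter.mp h).1
  have hcard : A.card = B.card := by rw [hA, hB, hG.2, hH.2]
  have hBA : ¬ B ⊆ A := by
    intro hsub
    have h1 : B ⊆ A.erase p := fun q hq =>
      Finset.mem_erase.mpr ⟨fun h => hpB (h ▸ hq), hsub hq⟩
    have h2 := Finset.card_le_card h1
    have h3 := Finset.card_erase_of_mem hpA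
    have h4 : 0 < A.card := Finset.card_pos.mpr ⟨p, hpA⟩
    omega
  obtain ⟨q, hqB, hqA⟩ := Finset.not_subset.mp hBA
  obtain ⟨hqH, hq2⟩ := Finset.mem_filter.mp hqB
  refine ⟨q.1, Finset.mem_sdiff.mpr ⟨?_, ?_⟩⟩
  · have : (q.1, p.2) = q := by rw [← hq2]
    rw [this]; exact hqH
  · intro hmem
    exact hqA (Finset.mem_filter.mpr ⟨by rwa [show q = (q.1, p.2) from by rw [← hq2]], hq2⟩)

/-- If `p ∈ G \ H` then some `(p.1, u') ∈ H \ G`. -/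
lemma row_swap {n n' : ℕ} {a : Fin n → ℕ} {b : Fin n' → ℕ}
    {G H : Finset (Fin n × Fin n')} (hG : IsRealisation a b G) (hH : IsRealisation a b H)
    {p : Fin n × Fin n'} (hp : p ∈ G \ H) : ∃ u', (p.1, u') ∈ H \ G := by
  classical
  set A := G.filter (fun q => q.1 = p.1) with hA
  set B := H.filter (fun q => q.1 = p.1) with hB
  have hpA : p ∈ A := Finset.mem_filter.mpr ⟨(Finset.mem_sdiff.mp hp).1, rfl⟩
  have hpB : p ∉ B := fun h => (Finset.mem_sdiff.mp hp).2 (Finset.mem_filter.mp h).1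
  have hcard : A.card = B.card := by rw [hA, hB, hG.1, hH.1]
  have hBA : ¬ B ⊆ A := by
    intro hsub
    have h1 : B ⊆ A.erase p := fun q hq =>
      Finset.mem_erase.mpr ⟨fun h => hpB (h ▸ hq), hsub hq⟩
    have h2 := Finset.card_le_card h1
    have h3 := Finset.card_erase_of_mem hpA
    have h4 : 0 < A.card := Finset.card_pos.mpr ⟨p, hpA⟩
    omega
  obtain ⟨q, hqB, hqA⟩ := Finset.not_subset.mp hBA
  obtain ⟨hqH, hq1⟩ := Finset.mem_filter.mp hqB
  refine ⟨q.2, Finset.mem_sdiff.mpr ⟨?_, ?_⟩⟩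
  · have : (p.1, q.2) = q := by rw [← hq1]
    rw [this]; exact hqH
  · intro hmem
    exact hqA (Finset.mem_filter.mpr ⟨by rwa [show q = (p.1, q.2) from by rw [← hq1]], hq1⟩)

lemma swap_step {n n' : ℕ} {a : Fin n → ℕ} {b : Fin n' → ℕ}
    {FE FN G : Finset (Fin n × Fin n')} (hG : IsFFixedRealisation a b FE FN G)
    {x0 x1 : Fin n} {y0 y1 : Fin n'} (hx : x0 ≠ x1) (hy : y0 ≠ y1)
    (h00 : (x0, y0) ∈ G) (h00e : (x0, y0) ∉ FE)
    (h11 : (x1, y1) ∈ G) (h11e : (x1, y1) ∉ FE)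
    (h10 : (x1, y0) ∉ G) (h10n : (x1, y0) ∉ FN)
    (h01 : (x0, y1) ∉ G) (h01n : (x0, y1) ∉ FN) :
    ∃ G' : Finset (Fin n × Fin n'),
      IsFFixedRealisation a b FE FN G' ∧ (symmDiff G G').card = 4 := by
  classical
  set G' : Finset (Fin n × Fin n') :=
    insert (x0, y1) (insert (x1, y0) ((G.erase (x0, y0)).erase (x1, y1))) with hG'
  have hmem : ∀ p : Fin n × Fin n',
      p ∈ G' ↔ p = (x0, y1) ∨ p = (x1, y0) ∨ (p ∈ G ∧ p ≠ (x0, y0) ∧ p ≠ (x1, y1)) := by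
    intro p
    simp only [hG', Finset.mem_insert, Finset.mem_erase]
    tauto
  refine ⟨G', ⟨⟨?_, ?_⟩, ?_, ?_⟩, ?_⟩
  · -- rows
    intro i
    by_cases hi0 : i = x0
    · subst hi0
      have he : G'.filter (fun p => p.1 = i) =
          insert (i, y1) ((G.filter (fun p => p.1 = i)).erase (i, y0)) := by
        ext p
        simp only [Finset.mem_filter, Finset.mem_insert, Finset.mem_erase, hmem]
        constructor
        · rintro ⟨(rfl | rfl | ⟨hpG, hne0, hne1⟩), h1⟩
          · exact Or.inl rfl
          · exact absurd h1 (by simpa using hx.symm)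
          · exact Or.inr ⟨hne0 ∘ (by rintro rfl; exact Prod.ext h1.symm rfl) ∘ id, hpG, h1⟩
        · rintro (rfl | ⟨hne, hpG, h1⟩)
          · exact ⟨Or.inl rfl, rfl⟩
          · refine ⟨Or.inr (Or.inr ⟨hpG, ?_, ?_⟩), h1⟩
            · rintro rfl; exact hne rfl
            · rintro rfl; exact hx h1.symm
      rw [he, Finset.card_insert_of_notMem, Finset.card_erase_of_mem]
      · have hpos : 0 < (G.filter (fun p => p.1 = i)).card :=
          Finset.card_pos.mpr ⟨(i, y0), Finset.mem_filter.mpr ⟨h00, rfl⟩⟩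
        have := hG.1.1 i
        omega
      · exact Finset.mem_filter.mpr ⟨h00, rfl⟩
      · intro hmem'
        exact h01 (Finset.mem_filter.mp (Finset.mem_of_mem_erase hmem')).1
    · by_cases hi1 : i = x1
      · subst hi1
        have he : G'.filter (fun p => p.1 = i) =
            insert (i, y0) ((G.filter (fun p => p.1 = i)).erase (i, y1)) := by
          ext p
          simp only [Finset.mem_filter, Finset.mem_insert, Finset.mem_erase, hmem]
          constructor
          · rintro ⟨(rfl | rfl | ⟨hpG, hne0, hne1⟩), h1⟩
            · exact absurd h1 (by simpa using hx)
            · exact Or.inl rfl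
            · exact Or.inr ⟨hne1 ∘ (by rintro rfl; exact Prod.ext h1.symm rfl) ∘ id, hpG, h1⟩
          · rintro (rfl | ⟨hne, hpG, h1⟩)
            · exact ⟨Or.inr (Or.inl rfl), rfl⟩
            · refine ⟨Or.inr (Or.inr ⟨hpG, ?_, ?_⟩), h1⟩
              · rintro rfl; exact hx h1
              · rintro rfl; exact hne rfl
        rw [he, Finset.card_insert_of_notMem, Finset.card_erase_of_mem]
        · have hpos : 0 < (G.filter (fun p => p.1 = i)).card :=
            Finset.card_pos.mpr ⟨(i, y1), Finset.mem_filter.mpr ⟨h11, rfl⟩⟩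
          have := hG.1.1 i
          omega
        · exact Finset.mem_filter.mpr ⟨h11, rfl⟩
        · intro hmem'
          exact h10 (Finset.mem_filter.mp (Finset.mem_of_mem_erase hmem')).1
      · have he : G'.filter (fun p => p.1 = i) = G.filter (fun p => p.1 = i) := by
          ext p
          simp only [Finset.mem_filter, hmem]
          constructor
          · rintro ⟨(rfl | rfl | ⟨hpG, -, -⟩), h1⟩
            · exact absurd h1.symm hi0
            · exact absurd h1.symm hi1
            · exact ⟨hpG, h1⟩
          · rintro ⟨hpG, h1⟩
            refine ⟨Or.inr (Or.inr ⟨hpG, ?_, ?_⟩), h1⟩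
            · rintro rfl; exact hi0 h1.symm
            · rintro rfl; exact hi1 h1.symm
        rw [he]; exact hG.1.1 i
  · -- columns
    intro j
    by_cases hj0 : j = y0
    · subst hj0
      have he : G'.filter (fun p => p.2 = j) =
          insert (x1, j) ((G.filter (fun p => p.2 = j)).erase (x0, j)) := by
        ext p
        simp only [Finset.mem_filter, Finset.mem_insert, Finset.mem_erase, hmem]
        constructor
        · rintro ⟨(rfl | rfl | ⟨hpG, hne0, hne1⟩), h1⟩
          · exact absurd h1 (by simpa using hy.symm)
          · exact Or.inl rfl
          · exact Or.inr ⟨hne0 ∘ (by rintro rfl; exact Prod.ext rfl h1.symm) ∘ id, hpG, h1⟩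
        · rintro (rfl | ⟨hne, hpG, h1⟩)
          · exact ⟨Or.inr (Or.inl rfl), rfl⟩
          · refine ⟨Or.inr (Or.inr ⟨hpG, ?_, ?_⟩), h1⟩
            · rintro rfl; exact hne rfl
            · rintro rfl; exact hy h1.symm
      rw [he, Finset.card_insert_of_notMem, Finset.card_erase_of_mem]
      · have hpos : 0 < (G.filter (fun p => p.2 = j)).card :=
          Finset.card_pos.mpr ⟨(x0, j), Finset.mem_filter.mpr ⟨h00, rfl⟩⟩
        have := hG.1.2 j
        omega
      · exact Finset.mem_filter.mpr ⟨h00, rfl⟩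
      · intro hmem'
        exact h10 (Finset.mem_filter.mp (Finset.mem_of_mem_erase hmem')).1
    · by_cases hj1 : j = y1
      · subst hj1
        have he : G'.filter (fun p => p.2 = j) =
            insert (x0, j) ((G.filter (fun p => p.2 = j)).erase (x1, j)) := by
          ext p
          simp only [Finset.mem_filter, Finset.mem_insert, Finset.mem_erase, hmem]
          constructor
          · rintro ⟨(rfl | rfl | ⟨hpG, hne0, hne1⟩), h1⟩
            · exact Or.inl rfl
            · exact absurd h1 (by simpa using hy)
            · exact Or.inr ⟨hne1 ∘ (by rintro rfl; exact Prod.ext rfl h1.symm) ∘ id, hpG, h1⟩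
          · rintro (rfl | ⟨hne, hpG, h1⟩)
            · exact ⟨Or.inl rfl, rfl⟩
            · refine ⟨Or.inr (Or.inr ⟨hpG, ?_, ?_⟩), h1⟩
              · rintro rfl; exact hy h1
              · rintro rfl; exact hne rfl
        rw [he, Finset.card_insert_of_notMem, Finset.card_erase_of_mem]
        · have hpos : 0 < (G.filter (fun p => p.2 = j)).card :=
            Finset.card_pos.mpr ⟨(x1, j), Finset.mem_filter.mpr ⟨h11, rfl⟩⟩
          have := hG.1.2 j
          omega
        · exact Finset.mem_filter.mpr ⟨h11, rfl⟩
        · intro hmem'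
          exact h01 (Finset.mem_filter.mp (Finset.mem_of_mem_erase hmem')).1
      · have he : G'.filter (fun p => p.2 = j) = G.filter (fun p => p.2 = j) := by
          ext p
          simp only [Finset.mem_filter, hmem]
          constructor
          · rintro ⟨(rfl | rfl | ⟨hpG, -, -⟩), h1⟩
            · exact absurd h1.symm hj1
            · exact absurd h1.symm hj0
            · exact ⟨hpG, h1⟩
          · rintro ⟨hpG, h1⟩
            refine ⟨Or.inr (Or.inr ⟨hpG, ?_, ?_⟩), h1⟩
            · rintro rfl; exact hj0 h1.symm
            · rintro rfl; exact hj1 h1.symm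
        rw [he]; exact hG.1.2 j
  · -- FE ⊆ G'
    intro p hp
    have hpG : p ∈ G := hG.2.1 hp
    rw [hmem]
    refine Or.inr (Or.inr ⟨hpG, ?_, ?_⟩)
    · rintro rfl; exact h00e hp
    · rintro rfl; exact h11e hp
  · -- FN ∩ G' = ∅
    rw [Finset.eq_empty_iff_forall_notMem]
    intro p hp
    obtain ⟨hpFN, hpG'⟩ := Finset.mem_inter.mp hp
    rcases (hmem p).mp hpG' with rfl | rfl | ⟨hpG, -, -⟩
    · exact h01n hpFN
    · exact h10n hpFN
    · have := hG.2.2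
      rw [Finset.eq_empty_iff_forall_notMem] at this
      exact this p (Finset.mem_inter.mpr ⟨hpFN, hpG⟩)
  · -- symmDiff card
    have hS : symmDiff G G' =
        ({(x0, y0), (x1, y1), (x1, y0), (x0, y1)} : Finset (Fin n × Fin n')) := by
      ext p
      rw [Finset.mem_symmDiff]
      simp only [hmem, Finset.mem_insert, Finset.mem_singleton]
      constructor
      · rintro (⟨hpG, hn⟩ | ⟨(rfl | rfl | ⟨hpG, -, -⟩), hnG⟩)
        · by_cases hp0 : p = (x0, y0)
          · exact Or.inl hp0
          · by_cases hp1 : p = (x1, y1)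
            · exact Or.inr (Or.inl hp1)
            · exact absurd (Or.inr (Or.inr ⟨hpG, hp0, hp1⟩)) hn
        · exact Or.inr (Or.inr (Or.inr rfl))
        · exact Or.inr (Or.inr (Or.inl rfl))
        · exact absurd hpG hnG
      · rintro (rfl | rfl | rfl | rfl)
        · refine Or.inl ⟨h00, ?_⟩
          push_neg
          refine ⟨?_, ?_, fun _ h => absurd rfl h⟩
          · intro h; exact hy (congrArg Prod.snd h)
          · intro h; exact hx (congrArg Prod.fst h)
        · refine Or.inl ⟨h11, ?_⟩
          push_neg
          refine ⟨?_, ?_, fun _ _ => rfl⟩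
          · intro h; exact hx (congrArg Prod.fst h).symm
          · intro h; exact hy (congrArg Prod.snd h).symm
        · exact Or.inr ⟨Or.inr (Or.inl rfl), h10⟩
        · exact Or.inr ⟨Or.inl rfl, h01⟩
    rw [hS]
    rw [Finset.card_insert_of_notMem, Finset.card_insert_of_notMem,
      Finset.card_insert_of_notMem, Finset.card_singleton]
    · intro h
      exact hx (congrArg Prod.fst (Finset.mem_singleton.mp h)).symm
    · intro h
      rcases Finset.mem_insert.mp h with h | h
      · exact hy (congrArg Prod.snd h).symm
      · exact hx (congrArg Prod.fst (Finset.mem_singleton.mp h)).symm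
    · intro h
      rcases Finset.mem_insert.mp h with h | h
      · exact hx (congrArg Prod.fst h)
      · rcases Finset.mem_insert.mp h with h | h
        · exact hx (congrArg Prod.fst h)
        · exact hy (congrArg Prod.snd (Finset.mem_singleton.mp h))

lemma exists_goodWalk {n n' : ℕ} {a : Fin n → ℕ} {b : Fin n' → ℕ}
    {FE FN G H : Finset (Fin n × Fin n')}
    (hG : IsFFixedRealisation a b FE FN G) (hH : IsFFixedRealisation a b FE FN H)
    (hne : H ≠ G) : ∃ k v u, GoodWalk G FE FN k v u := by
  classical
  have hHnFN : ∀ p ∈ H, p ∉ FN := by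
    intro p hp hpn
    have h := hH.2.2
    rw [Finset.eq_empty_iff_forall_notMem] at h
    exact h p (Finset.mem_inter.mpr ⟨hpn, hp⟩)
  have hred : ∃ e, e ∈ G \ H := by
    by_cases hsub : G ⊆ H
    · have h2 : ¬ H ⊆ G := fun h => hne (Finset.Subset.antisymm h hsub)
      obtain ⟨p, hpH, hpG⟩ := Finset.not_subset.mp h2
      obtain ⟨v', hv'⟩ := col_swap hH.1 hG.1 (Finset.mem_sdiff.mpr ⟨hpH, hpG⟩)
      exact ⟨_, hv'⟩
    · obtain ⟨p, hpG, hpH⟩ := Finset.not_subset.mp hsub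
      exact ⟨p, Finset.mem_sdiff.mpr ⟨hpG, hpH⟩⟩
  have hstep : ∀ e : Fin n × Fin n', ∃ e',
      e ∈ G \ H → (e' ∈ G \ H ∧ (e'.1, e.2) ∈ H \ G) := by
    intro e
    by_cases he : e ∈ G \ H
    · obtain ⟨v', hv'⟩ := col_swap hG.1 hH.1 he
      obtain ⟨u', hu'⟩ := row_swap hH.1 hG.1 hv'
      exact ⟨(v', u'), fun _ => ⟨hu', hv'⟩⟩
    · exact ⟨e, fun h => absurd h he⟩
  choose st hst using hstep
  obtain ⟨e₀, he₀⟩ := hred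
  have hfred : ∀ t, st^[t] e₀ ∈ G \ H := by
    intro t
    induction t with
    | zero => simpa using he₀
    | succ t ih => rw [Function.iterate_succ_apply']; exact (hst _ ih).1
  have hfblue : ∀ t, ((st^[t + 1] e₀).1, (st^[t] e₀).2) ∈ H \ G := by
    intro t
    rw [Function.iterate_succ_apply']
    exact (hst _ (hfred t)).2
  obtain ⟨s, t, hstlt, hfeq⟩ : ∃ s t, s < t ∧ st^[s] e₀ = st^[t] e₀ := by
    obtain ⟨x, y, hxy, heq⟩ :=
      Finite.exists_ne_map_eq_of_infinite (fun t => st^[t] e₀)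
    rcases lt_or_gt_of_ne hxy with h | h
    · exact ⟨x, y, h, heq⟩
    · exact ⟨y, x, h, heq.symm⟩
  refine ⟨t - s, fun i => (st^[s + i % (t - s)] e₀).1,
    fun i => (st^[s + i % (t - s)] e₀).2, by omega, ?_⟩
  intro i hi
  have him : i % (t - s) = i := Nat.mod_eq_of_lt hi
  have hred' := hfred (s + i)
  rw [Finset.mem_sdiff] at hred'
  constructor
  · simp only [him]
    exact ⟨hred'.1, fun hFE => hred'.2 (hH.2.1 hFE)⟩
  · have hblue := hfblue (s + i)
    rw [Finset.mem_sdiff] at hblue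
    have hkey : (st^[s + (i + 1) % (t - s)] e₀).1 = (st^[s + i + 1] e₀).1 := by
      by_cases hc : i + 1 < t - s
      · rw [Nat.mod_eq_of_lt hc, Nat.add_assoc]
      · have h0 : (i + 1) % (t - s) = 0 := by
          have : i + 1 = t - s := by omega
          simp [this]
        rw [h0, Nat.add_zero, hfeq, show s + i + 1 = t from by omega]
    simp only [Nat.mod_mod, him, hkey]
    exact ⟨hblue.2, hHnFN _ hblue.1⟩

/-- if `F = FE ∪ FN` contains no matching of size 3 and there are at
least two distinct `F`-fixed realisations of `S`, then every `F`-fixed realisation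
`G` admits a 4-swap: there is an `F`-fixed realisation `G'` with
`|E(G) △ E(G')| = 4`. -/
theorem stmt1 {n n' : ℕ} (a : Fin n → ℕ) (b : Fin n' → ℕ)
    (FE FN : Finset (Fin n × Fin n')) (hdisj : Disjoint FE FN)
    (hF : ¬ HasMatchingThree (FE ∪ FN))
    (htwo : ∃ E₁ E₂ : Finset (Fin n × Fin n'),
      IsFFixedRealisation a b FE FN E₁ ∧ IsFFixedRealisation a b FE FN E₂ ∧ E₁ ≠ E₂)
    (G : Finset (Fin n × Fin n')) (hG : IsFFixedRealisation a b FE FN G) :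
    ∃ G' : Finset (Fin n × Fin n'),
      IsFFixedRealisation a b FE FN G' ∧ (symmDiff G G').card = 4 := by
  classical
  obtain ⟨E₁, E₂, h₁, h₂, hne12⟩ := htwo
  obtain ⟨H, hH, hHG⟩ : ∃ H, IsFFixedRealisation a b FE FN H ∧ H ≠ G := by
    by_cases h : E₁ = G
    · exact ⟨E₂, h₂, fun hEG => hne12 (h.trans hEG.symm)⟩
    · exact ⟨E₁, h₁, h⟩
  have hexP : ∃ k, ∃ v : ℕ → Fin n, ∃ u : ℕ → Fin n', GoodWalk G FE FN k v u :=
    exists_goodWalk hG hH hHG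
  set k := Nat.find hexP with hkdef
  obtain ⟨v, u, hw⟩ := Nat.find_spec hexP
  rw [← hkdef] at hw
  have hmin : ∀ m, m < k → ¬ ∃ v : ℕ → Fin n, ∃ u : ℕ → Fin n', GoodWalk G FE FN m v u :=
    fun m hm => Nat.find_min hexP hm
  have hk0 : 0 < k := hw.1
  have hk1 : k ≠ 1 := by
    rintro hk1
    exact GoodWalk.not_one (hk1 ▸ hw)
  have hk2 : 2 ≤ k := by omega
  have hvinj : ∀ i j, i < j → j < k → v i ≠ v j := by
    intro i j hij hjk hv
    exact hmin (j - i) (by omega) ⟨_, _, hw.of_v_eq hij hjk hv⟩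
  have huinj : ∀ i j, i < j → j < k → u i ≠ u j := by
    intro i j hij hjk hv
    exact hmin (j - i) (by omega) ⟨_, _, hw.of_u_eq hij hjk hv⟩
  by_cases hk : k = 2
  · have hw2 : GoodWalk G FE FN 2 v u := hk ▸ hw
    obtain ⟨-, hcond⟩ := hw2
    obtain ⟨⟨h00, h00e⟩, h10, h10n⟩ := hcond 0 (by norm_num)
    obtain ⟨⟨h11, h11e⟩, h01, h01n⟩ := hcond 1 (by norm_num)
    exact swap_step hG (hvinj 0 1 one_pos (by omega)) (huinj 0 1 one_pos (by omega))
      h00 h00e h11 h11e h10 h10n h01 h01n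
  · have hk3 : 3 ≤ k := by omega
    have chord : ∀ r, r < k → (v r, u ((r + 1) % k)) ∈ FE ∪ FN := by
      intro r hr
      have hwr := hw.rotate r
      have h0 : r % k = r := Nat.mod_eq_of_lt hr
      have h1 : (1 + r) % k = (r + 1) % k := by rw [Nat.add_comm]
      by_cases hcg : (v r, u ((r + 1) % k)) ∈ G
      · by_cases hce : (v r, u ((r + 1) % k)) ∈ FE
        · exact Finset.mem_union_left _ hce
        · exact absurd ⟨_, _, hwr.shorten hk3 (by simpa [h0, h1] using hcg)
            (by simpa [h0, h1] using hce)⟩ (hmin (k - 1) (by omega))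
      · by_cases hcn : (v r, u ((r + 1) % k)) ∈ FN
        · exact Finset.mem_union_right _ hcn
        · exact absurd ⟨_, _, hwr.two_of_chord hk2 (by simpa [h0, h1] using hcg)
            (by simpa [h0, h1] using hcn)⟩ (hmin 2 (by omega))
    have m1 := chord 0 (by omega)
    have m2 := chord 1 (by omega)
    have m3 := chord 2 (by omega)
    have e1 : (0 + 1) % k = 1 := Nat.mod_eq_of_lt (by omega)
    have e2 : (1 + 1) % k = 2 := Nat.mod_eq_of_lt (by omega)
    rw [e1] at m1
    rw [e2] at m2
    exfalso
    apply hF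
    refine ⟨(v 0, u 1), (v 1, u 2), (v 2, u ((2 + 1) % k)), m1, m2, m3,
      hvinj 0 1 one_pos (by omega), hvinj 0 2 two_pos (by omega),
      hvinj 1 2 one_lt_two (by omega), huinj 1 2 one_lt_two (by omega), ?_, ?_⟩
    · by_cases h3 : k = 3
      · rw [show (2 + 1) % k = 0 by simp [h3]]
        exact (huinj 0 1 one_pos (by omega)).symm
      · rw [show (2 + 1) % k = 3 from Nat.mod_eq_of_lt (by omega)]
        exact huinj 1 3 (by omega) (by omega)
    · by_cases h3 : k = 3
      · rw [show (2 + 1) % k = 0 by simp [h3]]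
        exact (huinj 0 2 two_pos (by omega)).symm
      · rw [show (2 + 1) % k = 3 from Nat.mod_eq_of_lt (by omega)]
        exact huinj 2 3 (by omega) (by omega)
end

section
/- Let A_i, A_j, F_i, F_j be finite sets and define A_{i−j} := A_i \ (A_j ∪ F_i ∪ F_j) and A_{j−i} := A_j \ (A_i ∪ F_i ∪ F_j). Let B_{ij} ⊆ A_{i−j} ∪ A_{j−i} be any subset with |B_{ij}| = |A_{i−j}|, let B_{ji} := (A_{i−j} ∪ A_{j−i}) \ B_{ij}, and define B_i := (A_i \ A_{i−j}) ∪ B_{ij} and B_j := (A_j \ A_{j−i}) ∪ B_{ji}. Then: (i) |B_i| = |A_i| and |B_j| = |A_j|; (ii) B_i △ B_j = A_i △ A_j; and (iii) setting B_{i−j} := B_i \ (B_j ∪ F_i ∪ F_j) and B_{j−i} := B_j \ (B_i ∪ F_i ∪ F_j), one has |B_{i−j}| = |A_{i−j}| and |B_{j−i}| = |A_{j−i}|. -/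
set_option maxHeartbeats 1000000


/-- the set-theoretic core of an `F`-ignoring trade. With
`Aij = A_i \ (A_j ∪ F_i ∪ F_j)`, `Aji = A_j \ (A_i ∪ F_i ∪ F_j)`, a subset
`Bij ⊆ Aij ∪ Aji` of cardinality `|Aij|`, its complement `Bji`, and the traded
lists `Bi = (A_i \ Aij) ∪ Bij`, `Bj = (A_j \ Aji) ∪ Bji`, we have:
(i) `|Bi| = |A_i|`, `|Bj| = |A_j|`; (ii) `Bi △ Bj = A_i △ A_j`;
(iii) `|Bi \ (Bj ∪ F_i ∪ F_j)| = |Aij|` and `|Bj \ (Bi ∪ F_i ∪ F_j)| = |Aji|`. -/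
theorem stmt2 {α : Type*} [DecidableEq α]
    (Ai Aj Fi Fj Aij Aji Bij Bji Bi Bj : Finset α)
    (hAij : Aij = Ai \ (Aj ∪ Fi ∪ Fj))
    (hAji : Aji = Aj \ (Ai ∪ Fi ∪ Fj))
    (hBijsub : Bij ⊆ Aij ∪ Aji)
    (hBijcard : Bij.card = Aij.card)
    (hBji : Bji = (Aij ∪ Aji) \ Bij)
    (hBi : Bi = (Ai \ Aij) ∪ Bij)
    (hBj : Bj = (Aj \ Aji) ∪ Bji) :
    Bi.card = Ai.card ∧ Bj.card = Aj.card ∧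
    symmDiff Bi Bj = symmDiff Ai Aj ∧
    (Bi \ (Bj ∪ Fi ∪ Fj)).card = Aij.card ∧
    (Bj \ (Bi ∪ Fi ∪ Fj)).card = Aji.card := by
  have h1 : ∀ x, x ∈ Bij → x ∈ Aij ∨ x ∈ Aji := by
    intro x hx
    exact Finset.mem_union.mp (hBijsub hx)
  have h2 : ∀ x, x ∈ Bji ↔ (x ∈ Aij ∨ x ∈ Aji) ∧ x ∉ Bij := by
    intro x; rw [hBji]; simp
  have h3 : ∀ x, x ∈ Aij ↔ x ∈ Ai ∧ ¬(x ∈ Aj ∨ x ∈ Fi ∨ x ∈ Fj) := by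
    intro x; rw [hAij]; simp [or_assoc]
  have h4 : ∀ x, x ∈ Aji ↔ x ∈ Aj ∧ ¬(x ∈ Ai ∨ x ∈ Fi ∨ x ∈ Fj) := by
    intro x; rw [hAji]; simp [or_assoc]
  have h5 : ∀ x, x ∈ Bi ↔ (x ∈ Ai ∧ x ∉ Aij) ∨ x ∈ Bij := by
    intro x; rw [hBi]; simp
  have h6 : ∀ x, x ∈ Bj ↔ (x ∈ Aj ∧ x ∉ Aji) ∨ x ∈ Bji := by
    intro x; rw [hBj]; simp
  have hAijAi : Aij ⊆ Ai := by subst hAij; exact Finset.sdiff_subset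
  have hAjiAj : Aji ⊆ Aj := by subst hAji; exact Finset.sdiff_subset
  have hdisj : Disjoint Aij Aji := by
    rw [Finset.disjoint_left]
    intro a ha hb
    rw [h3] at ha; rw [h4] at hb; tauto
  have hd1 : Disjoint (Ai \ Aij) Bij := by
    rw [Finset.disjoint_left]
    intro a ha hb
    have := h1 a hb
    rw [Finset.mem_sdiff] at ha
    rw [h3] at *; rw [h4] at this; tauto
  have hBjicard : Bji.card = Aji.card := by
    rw [hBji, Finset.card_sdiff_of_subset hBijsub, Finset.card_union_of_disjoint hdisj,
      hBijcard]
    omega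
  have hd2 : Disjoint (Aj \ Aji) Bji := by
    rw [Finset.disjoint_left]
    intro a ha hb
    rw [h2] at hb
    rw [Finset.mem_sdiff] at ha
    rw [h3, h4] at hb
    rw [h4] at ha
    tauto
  have hcardBi : Bi.card = Ai.card := by
    rw [hBi, Finset.card_union_of_disjoint hd1, Finset.card_sdiff_of_subset hAijAi, hBijcard]
    have := Finset.card_le_card hAijAi
    omega
  have hcardBj : Bj.card = Aj.card := by
    rw [hBj, Finset.card_union_of_disjoint hd2, Finset.card_sdiff_of_subset hAjiAj, hBjicard]
    have := Finset.card_le_card hAjiAj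
    omega
  refine ⟨hcardBi, hcardBj, ?_, ?_, ?_⟩
  · ext x
    have h1x := h1 x
    simp only [h3, h4] at h1x
    rw [Finset.mem_symmDiff, Finset.mem_symmDiff, h5, h6, h2, h3, h4]
    clear hAij hAji hBijsub hBijcard hBji hBi hBj h1 h2 h3 h4 h5 h6 hAijAi
      hAjiAj hdisj hd1 hBjicard hd2 hcardBi hcardBj
    tauto
  · have key : Bi \ (Bj ∪ Fi ∪ Fj) = Bij := by
      ext x
      have h1x := h1 x
      simp only [h3, h4] at h1x
      rw [Finset.mem_sdiff, Finset.mem_union, Finset.mem_union, h5, h6, h2, h3, h4]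
      clear hAij hAji hBijsub hBijcard hBji hBi hBj h1 h2 h3 h4 h5 h6 hAijAi
        hAjiAj hdisj hd1 hBjicard hd2 hcardBi hcardBj
      tauto
    rw [key, hBijcard]
  · have key : Bj \ (Bi ∪ Fi ∪ Fj) = Bji := by
      ext x
      have h1x := h1 x
      simp only [h3, h4] at h1x
      rw [Finset.mem_sdiff, Finset.mem_union, Finset.mem_union, h5, h6, h2, h3, h4]
      clear hAij hAji hBijsub hBijcard hBji hBi hBj h1 h2 h3 h4 h5 h6 hAijAi
        hAjiAj hdisj hd1 hBjicard hd2 hcardBi hcardBj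
      tauto
    rw [key, hBjicard]
end

section
/- Let n ≥ 4 and let C be the cycle on vertices v_0, …, v_{2n−1} (indices taken modulo 2n). Let A be the set of all chords {v_i, v_j} such that the distance of i and j along C is odd and at least 3 (equivalently, (i − j) mod 2n is odd and different from 1 and 2n − 1). Then for every ℓ with 4 ≤ ℓ ≤ n, the graph with edge set A contains a cycle of length 2ℓ, i.e. there are pairwise distinct indices i_1, …, i_{2ℓ} in {0,…,2n−1} with {v_{i_s}, v_{i_{s+1}}} ∈ A for all s (indices of the sequence taken cyclically). -/
private lemma aux_mod_inj (N a b : ℕ) (h : a % N = b % N) (hab : a ≤ b)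
    (h2 : b < a + N) : a = b := by
  have hd : N ∣ b - a := (Nat.modEq_iff_dvd' hab).mp h
  have h0 : b - a = 0 := by
    by_contra hne
    have := Nat.le_of_dvd (by omega) hd
    omega
  omega

private lemma aux_mod_two_cases (N a : ℕ) (hN : 0 < N) (h : a < 2 * N) :
    a % N = a ∨ (N ≤ a ∧ a % N = a - N) := by
  by_cases hlt : a < N
  · exact Or.inl (Nat.mod_eq_of_lt hlt)
  · right
    refine ⟨by omega, ?_⟩
    rw [Nat.mod_eq_sub_mod (by omega)]
    exact Nat.mod_eq_of_lt (by omega)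

/-- let `n ≥ 4` and let `C` be the cycle on vertices `v_0, …, v_{2n-1}`
(indices mod `2n`). Let `A` be the set of chords `{v_i, v_j}` whose distance along
`C` is odd and at least 3, i.e. `(i - j) mod 2n` is odd and different from `1` and
`2n - 1`. Then for every `ℓ` with `4 ≤ ℓ ≤ n` the chord graph `A` contains a cycle
of length `2ℓ`: there are pairwise distinct indices `e 0, …, e (2ℓ-1)` in
`{0, …, 2n-1}` such that every cyclically consecutive pair forms a chord of `A`.
(For `s, t < 2n`, `(s + 2n - t) % (2n)` is the value of `(s - t) mod 2n`.) -/
theorem stmt4 (n : ℕ) (hn : 4 ≤ n) (ℓ : ℕ) (hℓ : 4 ≤ ℓ) (hℓn : ℓ ≤ n) :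
    ∃ e : ℕ → ℕ,
      (∀ s < 2 * ℓ, e s < 2 * n) ∧
      (∀ s < 2 * ℓ, ∀ t < 2 * ℓ, e s = e t → s = t) ∧
      (∀ s < 2 * ℓ,
        Odd ((e ((s + 1) % (2 * ℓ)) + 2 * n - e s) % (2 * n)) ∧
        (e ((s + 1) % (2 * ℓ)) + 2 * n - e s) % (2 * n) ≠ 1 ∧
        (e ((s + 1) % (2 * ℓ)) + 2 * n - e s) % (2 * n) ≠ 2 * n - 1) := by
  set N := 2 * n with hN
  have hN0 : 0 < N := by omega
  -- choose the offset d
  obtain ⟨d, hdodd, hd5, hdle, hm⟩ :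
      ∃ d : ℕ, d % 2 = 1 ∧ 5 ≤ d ∧ d + 3 ≤ N ∧
        ((2 * ℓ - 2 + d) % N = 3 ∨
          (11 ≤ (2 * ℓ - 2 + d) % N ∧ (2 * ℓ - 2 + d) % N + 3 ≤ N)) := by
    by_cases h1 : ℓ + 1 = n
    · refine ⟨7, by norm_num, by norm_num, by omega, Or.inl ?_⟩
      have h2 : 2 * ℓ - 2 + 7 = N + 3 := by omega
      rw [h2, Nat.add_mod_left]
      exact Nat.mod_eq_of_lt (by omega)
    · by_cases h2 : ℓ + 2 = n
      · refine ⟨9, by norm_num, by norm_num, by omega, Or.inl ?_⟩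
        have h3 : 2 * ℓ - 2 + 9 = N + 3 := by omega
        rw [h3, Nat.add_mod_left]
        exact Nat.mod_eq_of_lt (by omega)
      · by_cases h3 : ℓ = n
        · refine ⟨5, by norm_num, by norm_num, by omega, Or.inl ?_⟩
          have h4 : 2 * ℓ - 2 + 5 = N + 3 := by omega
          rw [h4, Nat.add_mod_left]
          exact Nat.mod_eq_of_lt (by omega)
        · -- here ℓ ≤ n - 3
          refine ⟨5, by norm_num, by norm_num, by omega, Or.inr ?_⟩
          have h4 : 2 * ℓ - 2 + 5 = 2 * ℓ + 3 := by omega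
          rw [h4, Nat.mod_eq_of_lt (by omega)]
          omega
  refine ⟨fun s => if s % 2 = 0 then s else (s + d - 1) % N, ?_, ?_, ?_⟩
  · -- bounds
    intro s hs
    by_cases hp : s % 2 = 0
    · simp only [hp, if_pos]
      omega
    · simp only [hp, if_neg, if_false]
      exact Nat.mod_lt _ hN0
  · -- injectivity
    have hpe : ∀ s : ℕ, (if s % 2 = 0 then s else (s + d - 1) % N) % 2 = s % 2 := by
      intro s
      by_cases hp : s % 2 = 0
      · simp [hp]
      · simp only [hp, if_false]
        rw [Nat.mod_mod_of_dvd _ ⟨n, hN⟩]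
        omega
    intro s hs t ht h
    simp only at h
    have hpar : s % 2 = t % 2 := by
      have h1 := hpe s
      have h2 := hpe t
      rw [h] at h1
      omega
    by_cases hp : s % 2 = 0
    · have hpt : t % 2 = 0 := by omega
      simpa only [hp, hpt, if_pos] using h
    · have hpt : ¬ (t % 2 = 0) := by omega
      simp only [hp, hpt, if_false] at h
      rcases le_total s t with hst | hst
      · have := aux_mod_inj N (s + d - 1) (t + d - 1) h (by omega) (by omega)
        omega
      · have := aux_mod_inj N (t + d - 1) (s + d - 1) h.symm (by omega) (by omega)
        omega
  · -- chord conditions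
    intro s hs
    by_cases hlast : s + 1 = 2 * ℓ
    · -- closing edge: s = 2ℓ - 1, which is odd, back to vertex 0
      have hsucc : (s + 1) % (2 * ℓ) = 0 := by rw [hlast, Nat.mod_self]
      have hsodd : ¬ (s % 2 = 0) := by omega
      simp only [hsucc, hsodd, if_false, Nat.zero_mod, if_true, reduceIte, ite_false, ite_true]
      have hms : s + d - 1 = 2 * ℓ - 2 + d := by omega
      rw [hms]
      set r := (2 * ℓ - 2 + d) % N with hr
      have hr3 : r = 3 ∨ (11 ≤ r ∧ r + 3 ≤ N) := hm
      have hrodd : r % 2 = 1 := by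
        rw [hr, Nat.mod_mod_of_dvd _ ⟨n, hN⟩]
        omega
      have key : (0 + N - r) % N = 0 + N - r := Nat.mod_eq_of_lt (by omega)
      rw [key]
      refine ⟨?_, by omega, by omega⟩
      rw [Nat.odd_iff]
      omega
    · have hsucc : (s + 1) % (2 * ℓ) = s + 1 := Nat.mod_eq_of_lt (by omega)
      rw [hsucc]
      by_cases hp : s % 2 = 0
      · -- even s: edge from s to (s + d) mod N
        have hp1 : ¬ ((s + 1) % 2 = 0) := by omega
        simp only [hp, hp1, if_pos, if_false]
        have hs1 : s + 1 + d - 1 = s + d := by omega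
        rw [hs1]
        have key : ((s + d) % N + N - s) % N = d := by
          rcases aux_mod_two_cases N (s + d) hN0 (by omega) with h | ⟨h1, h2⟩
          · rw [h]
            have : s + d + N - s = d + N := by omega
            rw [this, Nat.add_mod_right]
            exact Nat.mod_eq_of_lt (by omega)
          · rw [h2]
            have : s + d - N + N - s = d := by omega
            rw [this]
            exact Nat.mod_eq_of_lt (by omega)
        rw [key]
        refine ⟨?_, by omega, by omega⟩
        rw [Nat.odd_iff]
        omega
      · -- odd s: edge from (s + d - 1) mod N to s + 1
        have hp1 : (s + 1) % 2 = 0 := by omega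
        simp only [hp, hp1, if_pos, if_false]
        have key : (s + 1 + N - (s + d - 1) % N) % N = N + 2 - d := by
          rcases aux_mod_two_cases N (s + d - 1) hN0 (by omega) with h | ⟨h1, h2⟩
          · rw [h]
            have : s + 1 + N - (s + d - 1) = N + 2 - d := by omega
            rw [this]
            exact Nat.mod_eq_of_lt (by omega)
          · rw [h2]
            have : s + 1 + N - (s + d - 1 - N) = (N + 2 - d) + N := by omega
            rw [this, Nat.add_mod_right]
            exact Nat.mod_eq_of_lt (by omega)
        rw [key]
        refine ⟨?_, by omega, by omega⟩
        rw [Nat.odd_iff]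
        omega
end

section
/- Let G and G' be two F-fixed realisations of a bipartite degree sequence S (with arbitrary fixed set F = F_E ∪ F_N). Then there exist F-fixed realisations G_1, …, G_k of S with G_1 = G and G_k = G' such that for every 1 ≤ i < k, G_{i+1} is obtained from G_i by a single j-swap for some even j with 4 ≤ j ≤ 2·min{n, n'}. -/
/-- `G'` is obtained from `G` by a `j`-swap (`j = 2 * m` even, `m ≥ 2`): the
symmetric difference is a vertex-disjoint alternating cycle of length `j`, i.e.
there are distinct `v 0, …, v (m-1)` and distinct `u 0, …, u (m-1)` with
`G \ G' = {(v s, u s) : s < m}` and `G' \ G = {(v (s+1 mod m), u s) : s < m}`. -/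
def IsJSwap {n n' : ℕ} (G G' : Finset (Fin n × Fin n')) (j : ℕ) : Prop :=
  ∃ m : ℕ, j = 2 * m ∧ 2 ≤ m ∧
    ∃ (v : ℕ → Fin n) (u : ℕ → Fin n'),
      (∀ s < m, ∀ t < m, v s = v t → s = t) ∧
      (∀ s < m, ∀ t < m, u s = u t → s = t) ∧
      G \ G' = (Finset.range m).image (fun s => (v s, u s)) ∧
      G' \ G = (Finset.range m).image (fun s => (v ((s + 1) % m), u s))


lemma filter_sdiff_eq {α : Type*} [DecidableEq α] (A B : Finset α) (P : α → Prop) [DecidablePred P] :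
    (A \ B).filter P = A.filter P \ B.filter P := by
  ext x; simp [Finset.mem_filter, Finset.mem_sdiff]; tauto

lemma filter_sdiff_card_eq {α : Type*} [DecidableEq α] (A B : Finset α) (P : α → Prop) [DecidablePred P]
    (h : (A.filter P).card = (B.filter P).card) :
    ((A \ B).filter P).card = ((B \ A).filter P).card := by
  rw [filter_sdiff_eq, filter_sdiff_eq]
  have h1 := Finset.card_sdiff_add_card_inter (A.filter P) (B.filter P)
  have h2 := Finset.card_sdiff_add_card_inter (B.filter P) (A.filter P)
  rw [Finset.inter_comm] at h2
  omega

lemma real_card {n n' : ℕ} (a : Fin n → ℕ) (b : Fin n' → ℕ) (E : Finset (Fin n × Fin n'))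
    (hE : IsRealisation a b E) : E.card = ∑ i : Fin n, a i := by
  have := Finset.card_eq_sum_card_fiberwise (f := Prod.fst) (s := E) (t := Finset.univ)
    (fun x _ => Finset.mem_univ _)
  rw [this]
  exact Finset.sum_congr rfl fun i _ => hE.1 i

lemma cycle_exists {n n' : ℕ} (D D' : Finset (Fin n × Fin n'))
    (hdisj : Disjoint D D')
    (hrow : ∀ i, (D.filter fun p => p.1 = i).card = (D'.filter fun p => p.1 = i).card)
    (hcol : ∀ j, (D.filter fun p => p.2 = j).card = (D'.filter fun p => p.2 = j).card)
    (hne : D.Nonempty) :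
    ∃ m, 2 ≤ m ∧ m ≤ n ∧ m ≤ n' ∧
      ∃ (v : ℕ → Fin n) (u : ℕ → Fin n'),
        (∀ s < m, ∀ t < m, v s = v t → s = t) ∧
        (∀ s < m, ∀ t < m, u s = u t → s = t) ∧
        (∀ s < m, (v s, u s) ∈ D) ∧
        (∀ s < m, (v ((s + 1) % m), u s) ∈ D') := by
  classical
  obtain ⟨e0, he0⟩ := hne
  -- step existence
  have step' : ∀ p : Fin n × Fin n', ∃ p' q : Fin n × Fin n',
      (p ∈ D → p' ∈ D ∧ q ∈ D' ∧ q.2 = p.2 ∧ p'.1 = q.1) := by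
    intro p
    by_cases hp : p ∈ D
    · have h1 : (D.filter fun r => r.2 = p.2).Nonempty := ⟨p, by simp [hp]⟩
      have h2 : (D'.filter fun r => r.2 = p.2).Nonempty := by
        rw [← Finset.card_pos] at h1 ⊢; rw [← hcol p.2]; exact h1
      obtain ⟨q, hq⟩ := h2
      rw [Finset.mem_filter] at hq
      have h3 : (D'.filter fun r => r.1 = q.1).Nonempty := ⟨q, by simp [hq.1]⟩
      have h4 : (D.filter fun r => r.1 = q.1).Nonempty := by
        rw [← Finset.card_pos] at h3 ⊢; rw [hrow q.1]; exact h3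
      obtain ⟨p', hp'⟩ := h4
      rw [Finset.mem_filter] at hp'
      exact ⟨p', q, fun _ => ⟨hp'.1, hq.1, hq.2, hp'.2⟩⟩
    · exact ⟨p, p, fun h => absurd h hp⟩
  choose nxt mid hstep using step'
  set E : ℕ → Fin n × Fin n' := fun k => nxt^[k] e0 with hE
  have hEsucc : ∀ k, E (k + 1) = nxt (E k) := fun k => Function.iterate_succ_apply' nxt k e0
  have hED : ∀ k, E k ∈ D := by
    intro k
    induction k with
    | zero => exact he0
    | succ k ih => rw [hEsucc]; exact (hstep _ ih).1
  set v : ℕ → Fin n := fun k => (E k).1 with hv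
  set u : ℕ → Fin n' := fun k => (E k).2 with hu
  have hvD : ∀ k, (v k, u k) ∈ D := fun k => hED k
  have hvD' : ∀ k, (v (k + 1), u k) ∈ D' := by
    intro k
    have h := hstep (E k) (hED k)
    have : (v (k + 1), u k) = mid (E k) := by
      refine Prod.ext ?_ ?_
      · show (E (k+1)).1 = _; rw [hEsucc]; exact h.2.2.2
      · exact (h.2.2.1).symm
    rw [this]; exact h.2.1
  have hnotboth : ∀ p, p ∈ D → p ∉ D' := fun p hp => Finset.disjoint_left.mp hdisj hp
  have hvv : ∀ k, v (k + 1) ≠ v k := by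
    intro k h
    exact hnotboth _ (hvD k) (h ▸ hvD' k)
  have huu : ∀ k, u (k + 1) ≠ u k := by
    intro k h
    exact hnotboth _ (hvD (k + 1)) (h ▸ hvD' k)
  -- pigeonhole on v
  have hpig : ∃ l, ∃ k < l, v k = v l := by
    have hn : 0 < n := (v 0).pos
    have : ¬ Function.Injective (fun i : Fin (n + 1) => v i) := by
      intro hinj
      have := Fintype.card_le_of_injective _ hinj
      simp at this
    rw [Function.not_injective_iff] at this
    obtain ⟨i, j, hij, hne⟩ := this
    rcases hne.lt_or_gt with h | h
    · exact ⟨j, i, h, hij⟩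
    · exact ⟨i, j, h, hij.symm⟩
  -- first repetition, interleaved order
  set Q : ℕ → Prop := fun t => ∃ l k, k < l ∧
    ((t = 2 * l ∧ v k = v l) ∨ (t = 2 * l + 1 ∧ u k = u l)) with hQ
  have hQex : ∃ t, Q t := by
    obtain ⟨l, k, hkl, hvk⟩ := hpig
    exact ⟨2 * l, l, k, hkl, Or.inl ⟨rfl, hvk⟩⟩
  set t₀ := Nat.find hQex with ht₀
  have hQt₀ : Q t₀ := Nat.find_spec hQex
  have hQmin : ∀ t < t₀, ¬ Q t := fun t ht => Nat.find_min hQex ht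
  have hvinj : ∀ k l, k < l → 2 * l < t₀ → v k ≠ v l := by
    intro k l hkl hlt h
    exact hQmin _ hlt ⟨l, k, hkl, Or.inl ⟨rfl, h⟩⟩
  have huinj : ∀ k l, k < l → 2 * l + 1 < t₀ → u k ≠ u l := by
    intro k l hkl hlt h
    exact hQmin _ hlt ⟨l, k, hkl, Or.inr ⟨rfl, h⟩⟩
  obtain ⟨l, k, hkl, hcase⟩ := hQt₀
  -- in both cases produce the cycle
  have main : ∃ m, 2 ≤ m ∧
      ∃ (V : ℕ → Fin n) (U : ℕ → Fin n'),
        (∀ s < m, ∀ t < m, V s = V t → s = t) ∧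
        (∀ s < m, ∀ t < m, U s = U t → s = t) ∧
        (∀ s < m, (V s, U s) ∈ D) ∧
        (∀ s < m, (V ((s + 1) % m), U s) ∈ D') := by
    rcases hcase with ⟨hteq, hvrep⟩ | ⟨hteq, hurep⟩
    · -- v k = v l, t₀ = 2l
      have hk2 : k + 2 ≤ l := by
        rcases Nat.lt_or_ge (k + 1) l with h | h
        · omega
        · exfalso
          have : k = l - 1 := by omega
          have hl1 : l = (l - 1) + 1 := by omega
          exact hvv (l - 1) (by rw [← hl1, ← this]; exact hvrep.symm)
      refine ⟨l - k, by omega, (fun s => v (k + s)), (fun s => u (k + s)), ?_, ?_, ?_, ?_⟩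
      · intro s hs t ht heq
        by_contra hne
        rcases Nat.lt_or_ge s t with h | h
        · exact hvinj (k + s) (k + t) (by omega) (by omega) heq
        · exact hvinj (k + t) (k + s) (by omega) (by omega) heq.symm
      · intro s hs t ht heq
        by_contra hne
        rcases Nat.lt_or_ge s t with h | h
        · exact huinj (k + s) (k + t) (by omega) (by omega) heq
        · exact huinj (k + t) (k + s) (by omega) (by omega) heq.symm
      · intro s hs; exact hvD (k + s)
      · intro s hs
        show (v (k + ((s + 1) % (l - k))), u (k + s)) ∈ D'
        rcases Nat.lt_or_ge (s + 1) (l - k) with h | h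
        · rw [Nat.mod_eq_of_lt h]
          have : k + (s + 1) = (k + s) + 1 := by omega
          rw [this]; exact hvD' (k + s)
        · have hs1 : s = l - k - 1 := by omega
          have : (s + 1) % (l - k) = 0 := by
            have : s + 1 = l - k := by omega
            simp [this]
          rw [this]
          have h1 : k + s = l - 1 := by omega
          have h2 : l = (l - 1) + 1 := by omega
          have := hvD' (l - 1)
          rw [← h2, ← hvrep] at this
          simpa [h1] using this
    · -- u k = u l, t₀ = 2l + 1
      have hk2 : k + 2 ≤ l := by
        rcases Nat.lt_or_ge (k + 1) l with h | h
        · omega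
        · exfalso
          have : k = l - 1 := by omega
          have hl1 : l = (l - 1) + 1 := by omega
          exact huu (l - 1) (by rw [← hl1, ← this]; exact hurep.symm)
      refine ⟨l - k, by omega, (fun s => v (k + 1 + s)), (fun s => u (k + 1 + s)), ?_, ?_, ?_, ?_⟩
      · intro s hs t ht heq
        by_contra hne
        rcases Nat.lt_or_ge s t with h | h
        · exact hvinj (k + 1 + s) (k + 1 + t) (by omega) (by omega) heq
        · exact hvinj (k + 1 + t) (k + 1 + s) (by omega) (by omega) heq.symm
      · intro s hs t ht heq
        -- indices in [k+1, l]; u at l equals u k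
        by_contra hne
        have key : ∀ s' t', k + 1 ≤ s' → s' < t' → t' ≤ l → u s' ≠ u t' := by
          intro s' t' hs' hst' ht' h
          rcases Nat.lt_or_ge t' l with hlt | hge
          · exact huinj s' t' hst' (by omega) h
          · have ht'l : t' = l := by omega
            rw [ht'l, ← hurep] at h
            exact huinj k s' (by omega) (by omega) h.symm
        rcases Nat.lt_or_ge s t with h | h
        · exact key (k + 1 + s) (k + 1 + t) (by omega) (by omega) (by omega) heq
        · exact key (k + 1 + t) (k + 1 + s) (by omega) (by omega) (by omega) heq.symm
      · intro s hs; exact hvD (k + 1 + s)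
      · intro s hs
        show (v (k + 1 + ((s + 1) % (l - k))), u (k + 1 + s)) ∈ D'
        rcases Nat.lt_or_ge (s + 1) (l - k) with h | h
        · rw [Nat.mod_eq_of_lt h]
          have : k + 1 + (s + 1) = (k + 1 + s) + 1 := by omega
          rw [this]; exact hvD' (k + 1 + s)
        · have : (s + 1) % (l - k) = 0 := by
            have : s + 1 = l - k := by omega
            simp [this]
          rw [this]
          have h1 : k + 1 + s = l := by omega
          have := hvD' k
          rw [hurep] at this
          simpa [h1] using this
  obtain ⟨m, hm2, V, U, hVinj, hUinj, hVD, hVD'⟩ := main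
  have hmn : m ≤ n := by
    have hinj : Function.Injective (fun s : Fin m => V s) := by
      intro s t h
      exact Fin.ext (hVinj s s.2 t t.2 h)
    simpa using Fintype.card_le_of_injective _ hinj
  have hmn' : m ≤ n' := by
    have hinj : Function.Injective (fun s : Fin m => U s) := by
      intro s t h
      exact Fin.ext (hUinj s s.2 t t.2 h)
    simpa using Fintype.card_le_of_injective _ hinj
  exact ⟨m, hm2, hmn, hmn', V, U, hVinj, hUinj, hVD, hVD'⟩

lemma mod_succ_inj (m s t : ℕ) (hs : s < m) (ht : t < m)
    (h : (s + 1) % m = (t + 1) % m) : s = t := by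
  rcases Nat.lt_or_ge (s + 1) m with h1 | h1 <;> rcases Nat.lt_or_ge (t + 1) m with h2 | h2
  · rw [Nat.mod_eq_of_lt h1, Nat.mod_eq_of_lt h2] at h; omega
  · have ht1 : t + 1 = m := by omega
    rw [Nat.mod_eq_of_lt h1, ht1, Nat.mod_self] at h; omega
  · have hs1 : s + 1 = m := by omega
    rw [Nat.mod_eq_of_lt h2, hs1, Nat.mod_self] at h; omega
  · omega

lemma pred_succ_mod (m t : ℕ) (hm : 2 ≤ m) (ht : t < m) :
    ((t + (m - 1)) % m + 1) % m = t := by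
  rcases Nat.lt_or_ge (t + (m - 1)) m with h1 | h1
  · rw [Nat.mod_eq_of_lt h1]
    have ht0 : t = 0 := by omega
    have : t + (m - 1) + 1 = m := by omega
    rw [this, Nat.mod_self, ht0]
  · have h2 : (t + (m - 1)) % m = t - 1 := by
      have h3 : t + (m - 1) - m = t - 1 := by omega
      rw [Nat.mod_eq_sub_mod h1, h3, Nat.mod_eq_of_lt (by omega)]
    rw [h2, Nat.mod_eq_of_lt (by omega)]
    omega

lemma swap_step_s13 {n n' : ℕ} (a : Fin n → ℕ) (b : Fin n' → ℕ)
    (FE FN : Finset (Fin n × Fin n'))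
    (G G' : Finset (Fin n × Fin n'))
    (hG : IsFFixedRealisation a b FE FN G)
    (hG' : IsFFixedRealisation a b FE FN G')
    (hne : G ≠ G') :
    ∃ G₁, IsFFixedRealisation a b FE FN G₁ ∧
      (∃ j, j ≤ 2 * min n n' ∧ IsJSwap G G₁ j) ∧
      (G₁ \ G').card < (G \ G').card := by
  classical
  set D := G \ G' with hD
  set D' := G' \ G with hD'
  have hcards : G.card = G'.card := by
    rw [real_card a b G hG.1, real_card a b G' hG'.1]
  have hDne : D.Nonempty := by
    rw [Finset.nonempty_iff_ne_empty]
    intro h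
    have hsub : G ⊆ G' := by
      intro x hx
      by_contra hx'
      have : x ∈ D := Finset.mem_sdiff.mpr ⟨hx, hx'⟩
      simp [h] at this
    exact hne (Finset.eq_of_subset_of_card_le hsub (le_of_eq hcards.symm))
  have hdisjDD : Disjoint D D' := by
    rw [Finset.disjoint_left]
    intro p hp hp'
    rw [Finset.mem_sdiff] at hp hp'
    exact hp'.2 hp.1
  have hrow : ∀ i, (D.filter fun p => p.1 = i).card = (D'.filter fun p => p.1 = i).card := by
    intro i
    exact filter_sdiff_card_eq G G' _ (by rw [hG.1.1 i, hG'.1.1 i])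
  have hcol : ∀ j, (D.filter fun p => p.2 = j).card = (D'.filter fun p => p.2 = j).card := by
    intro j
    exact filter_sdiff_card_eq G G' _ (by rw [hG.1.2 j, hG'.1.2 j])
  obtain ⟨m, hm2, hmn, hmn', v, u, hvinj, huinj, hvD, hvD'⟩ :=
    cycle_exists D D' hdisjDD hrow hcol hDne
  set R : Finset (Fin n × Fin n') := (Finset.range m).image (fun s => (v s, u s)) with hR
  set A : Finset (Fin n × Fin n') := (Finset.range m).image (fun s => (v ((s + 1) % m), u s)) with hA
  have hRD : R ⊆ D := by
    intro x hx
    rw [hR, Finset.mem_image] at hx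
    obtain ⟨s, hs, rfl⟩ := hx
    exact hvD s (Finset.mem_range.mp hs)
  have hAD' : A ⊆ D' := by
    intro x hx
    rw [hA, Finset.mem_image] at hx
    obtain ⟨s, hs, rfl⟩ := hx
    exact hvD' s (Finset.mem_range.mp hs)
  have hRG : R ⊆ G := fun x hx => (Finset.mem_sdiff.mp (hRD hx)).1
  have hRnG' : ∀ x ∈ R, x ∉ G' := fun x hx => (Finset.mem_sdiff.mp (hRD hx)).2
  have hAG' : ∀ x ∈ A, x ∈ G' := fun x hx => (Finset.mem_sdiff.mp (hAD' hx)).1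
  have hAnG : ∀ x ∈ A, x ∉ G := fun x hx => (Finset.mem_sdiff.mp (hAD' hx)).2
  set G₁ : Finset (Fin n × Fin n') := (G \ R) ∪ A with hG₁
  have hmemG₁ : ∀ x, x ∈ G₁ ↔ (x ∈ G ∧ x ∉ R) ∨ x ∈ A := by
    intro x; simp [hG₁, Finset.mem_union, Finset.mem_sdiff]
  -- symmetric differences
  have hGsdiff : G \ G₁ = R := by
    ext x
    rw [Finset.mem_sdiff, hmemG₁]
    constructor
    · rintro ⟨hxG, hx⟩
      by_contra hxR
      exact hx (Or.inl ⟨hxG, hxR⟩)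
    · intro hxR
      exact ⟨hRG hxR, by
        rintro (⟨_, hxR'⟩ | hxA)
        · exact hxR' hxR
        · exact hAnG x hxA (hRG hxR)⟩
  have hG₁sdiff : G₁ \ G = A := by
    ext x
    rw [Finset.mem_sdiff, hmemG₁]
    constructor
    · rintro ⟨h1 | h2, hxG⟩
      · exact absurd h1.1 hxG
      · exact h2
    · intro hxA
      exact ⟨Or.inr hxA, hAnG x hxA⟩
  -- filter counts on R and A
  have hfiltR1 : ∀ i : Fin n, (R.filter fun p => p.1 = i).card =
      ((Finset.range m).filter fun s => v s = i).card := by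
    intro i
    rw [hR, Finset.filter_image]
    apply Finset.card_image_of_injOn
    intro s hs t ht h
    rw [Finset.mem_coe, Finset.mem_filter, Finset.mem_range] at hs ht
    exact hvinj s hs.1 t ht.1 (congrArg Prod.fst h)
  have hfiltA1 : ∀ i : Fin n, (A.filter fun p => p.1 = i).card =
      ((Finset.range m).filter fun s => v ((s + 1) % m) = i).card := by
    intro i
    rw [hA, Finset.filter_image]
    apply Finset.card_image_of_injOn
    intro s hs t ht h
    rw [Finset.mem_coe, Finset.mem_filter, Finset.mem_range] at hs ht
    exact huinj s hs.1 t ht.1 (congrArg Prod.snd h)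
  have hfiltR2 : ∀ j : Fin n', (R.filter fun p => p.2 = j).card =
      ((Finset.range m).filter fun s => u s = j).card := by
    intro j
    rw [hR, Finset.filter_image]
    apply Finset.card_image_of_injOn
    intro s hs t ht h
    rw [Finset.mem_coe, Finset.mem_filter, Finset.mem_range] at hs ht
    exact hvinj s hs.1 t ht.1 (congrArg Prod.fst h)
  have hfiltA2 : ∀ j : Fin n', (A.filter fun p => p.2 = j).card =
      ((Finset.range m).filter fun s => u s = j).card := by
    intro j
    rw [hA, Finset.filter_image]
    apply Finset.card_image_of_injOn
    intro s hs t ht h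
    rw [Finset.mem_coe, Finset.mem_filter, Finset.mem_range] at hs ht
    exact huinj s hs.1 t ht.1 (congrArg Prod.snd h)
  -- the cyclic shift bijection
  have hshift : ∀ i : Fin n, ((Finset.range m).filter fun s => v ((s + 1) % m) = i).card =
      ((Finset.range m).filter fun s => v s = i).card := by
    intro i
    apply Finset.card_bij (fun s _ => (s + 1) % m)
    · intro s hs
      rw [Finset.mem_filter, Finset.mem_range] at hs ⊢
      exact ⟨Nat.mod_lt _ (by omega), hs.2⟩
    · intro s hs t ht h
      rw [Finset.mem_filter, Finset.mem_range] at hs ht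
      exact mod_succ_inj m s t hs.1 ht.1 h
    · intro t ht
      rw [Finset.mem_filter, Finset.mem_range] at ht
      refine ⟨(t + (m - 1)) % m, ?_, pred_succ_mod m t hm2 ht.1⟩
      rw [Finset.mem_filter, Finset.mem_range]
      exact ⟨Nat.mod_lt _ (by omega), by rw [pred_succ_mod m t hm2 ht.1]; exact ht.2⟩
  -- disjointness of A with G \ R
  have hdisjA : Disjoint (G \ R) A := by
    rw [Finset.disjoint_right]
    intro x hxA hx
    exact hAnG x hxA (Finset.mem_sdiff.mp hx).1
  -- degree computation
  have hcardfilter : ∀ (P : Fin n × Fin n' → Prop) [DecidablePred P],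
      (R.filter P).card = (A.filter P).card →
      (G₁.filter P).card = (G.filter P).card := by
    intro P _ hPR
    rw [hG₁, Finset.filter_union, Finset.card_union_of_disjoint
      (Finset.disjoint_filter_filter hdisjA)]
    rw [filter_sdiff_eq]
    rw [Finset.card_sdiff_of_subset (Finset.filter_subset_filter P hRG)]
    have hle : (R.filter P).card ≤ (G.filter P).card :=
      Finset.card_le_card (Finset.filter_subset_filter P hRG)
    omega
  refine ⟨G₁, ⟨⟨?_, ?_⟩, ?_, ?_⟩, ⟨2 * m, ?_, ?_⟩, ?_⟩
  · intro i
    rw [hcardfilter _ (by rw [hfiltR1 i, hfiltA1 i, hshift i])]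
    exact hG.1.1 i
  · intro j
    rw [hcardfilter _ (by rw [hfiltR2 j, hfiltA2 j])]
    exact hG.1.2 j
  · -- FE ⊆ G₁
    intro x hx
    rw [hmemG₁]
    left
    refine ⟨hG.2.1 hx, fun hxR => hRnG' x hxR (hG'.2.1 hx)⟩
  · -- FN ∩ G₁ = ∅
    rw [Finset.eq_empty_iff_forall_notMem]
    intro x hx
    rw [Finset.mem_inter, hmemG₁] at hx
    obtain ⟨hxFN, h1 | h2⟩ := hx
    · have : x ∉ G := by
        intro hxG
        have : x ∈ FN ∩ G := Finset.mem_inter.mpr ⟨hxFN, hxG⟩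
        simp [hG.2.2] at this
      exact this h1.1
    · have : x ∈ FN ∩ G' := Finset.mem_inter.mpr ⟨hxFN, hAG' x h2⟩
      simp [hG'.2.2] at this
  · -- j bound
    omega
  · -- IsJSwap
    exact ⟨m, rfl, hm2, v, u, hvinj, huinj, hGsdiff, hG₁sdiff⟩
  · -- card decreases
    have hG₁G' : G₁ \ G' = (G \ G') \ R := by
      ext x
      rw [Finset.mem_sdiff, hmemG₁, Finset.mem_sdiff, Finset.mem_sdiff]
      constructor
      · rintro ⟨h1 | h2, hxG'⟩
        · exact ⟨⟨h1.1, hxG'⟩, h1.2⟩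
        · exact absurd (hAG' x h2) hxG'
      · rintro ⟨⟨hxG, hxG'⟩, hxR⟩
        exact ⟨Or.inl ⟨hxG, hxR⟩, hxG'⟩
    rw [hG₁G']
    have hRsub : R ⊆ G \ G' := hRD
    have hRne : R.Nonempty := by
      refine ⟨(v 0, u 0), ?_⟩
      rw [hR, Finset.mem_image]
      exact ⟨0, Finset.mem_range.mpr (by omega), rfl⟩
    exact Finset.card_lt_card (Finset.sdiff_ssubset hRsub hRne)

/-- any two `F`-fixed realisations `G`, `G'` of `S` (for an
arbitrary fixed set `F = FE ∪ FN`) are connected by a sequence `G_1, …, G_k` of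
`F`-fixed realisations with `G_1 = G`, `G_k = G'` in which each `G_{i+1}` is
obtained from `G_i` by a single `j`-swap for some even `j` with
`4 ≤ j ≤ 2·min{n, n'}`. -/
theorem stmt13 {n n' : ℕ} (a : Fin n → ℕ) (b : Fin n' → ℕ)
    (FE FN : Finset (Fin n × Fin n')) (hdisj : Disjoint FE FN)
    (G G' : Finset (Fin n × Fin n'))
    (hG : IsFFixedRealisation a b FE FN G)
    (hG' : IsFFixedRealisation a b FE FN G') :
    ∃ (k : ℕ) (Gs : ℕ → Finset (Fin n × Fin n')),
      1 ≤ k ∧ Gs 1 = G ∧ Gs k = G' ∧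
      (∀ i, 1 ≤ i → i ≤ k → IsFFixedRealisation a b FE FN (Gs i)) ∧
      (∀ i, 1 ≤ i → i < k →
        ∃ j, j ≤ 2 * min n n' ∧ IsJSwap (Gs i) (Gs (i + 1)) j) := by
  classical
  suffices H : ∀ c (G : Finset (Fin n × Fin n')), IsFFixedRealisation a b FE FN G →
      (G \ G').card ≤ c →
      ∃ (k : ℕ) (Gs : ℕ → Finset (Fin n × Fin n')),
        1 ≤ k ∧ Gs 1 = G ∧ Gs k = G' ∧
        (∀ i, 1 ≤ i → i ≤ k → IsFFixedRealisation a b FE FN (Gs i)) ∧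
        (∀ i, 1 ≤ i → i < k →
          ∃ j, j ≤ 2 * min n n' ∧ IsJSwap (Gs i) (Gs (i + 1)) j) by
    exact H _ G hG le_rfl
  intro c
  induction c with
  | zero =>
    intro G hGf hcard
    have hGeq : G = G' := by
      have hsub : G ⊆ G' := by
        rw [Nat.le_zero, Finset.card_eq_zero, Finset.sdiff_eq_empty_iff_subset] at hcard
        exact hcard
      apply Finset.eq_of_subset_of_card_le hsub
      rw [real_card a b G hGf.1, real_card a b G' hG'.1]
    refine ⟨1, fun _ => G, le_rfl, rfl, hGeq, fun i _ _ => hGf, fun i h1 h2 => by omega⟩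
  | succ c ih =>
    intro G hGf hcard
    by_cases heq : G = G'
    · refine ⟨1, fun _ => G, le_rfl, rfl, heq, fun i _ _ => hGf, fun i h1 h2 => by omega⟩
    · obtain ⟨G₁, hG₁f, ⟨j, hjle, hjswap⟩, hlt⟩ :=
        swap_step_s13 a b FE FN G G' hGf hG' heq
      obtain ⟨k', Gs', hk'1, hGs'1, hGs'k, hGs'real, hGs'swap⟩ :=
        ih G₁ hG₁f (by omega)
      refine ⟨k' + 1, fun i => if i ≤ 1 then G else Gs' (i - 1), by omega, by simp, ?_, ?_, ?_⟩
      · have : ¬ (k' + 1 ≤ 1) := by omega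
        simp only [this, if_false]
        simpa using hGs'k
      · intro i hi1 hik
        by_cases h : i ≤ 1
        · simpa [h] using hGf
        · simp only [h, if_false]
          exact hGs'real (i - 1) (by omega) (by omega)
      · intro i hi1 hik
        by_cases h : i = 1
        · subst h
          have h2 : ¬ (1 + 1 ≤ 1) := by omega
          simp only [le_refl, if_true, h2, if_false]
          have : (1 + 1 - 1 : ℕ) = 1 := by omega
          rw [this, hGs'1]
          exact ⟨j, hjle, hjswap⟩
        · have hh1 : ¬ (i ≤ 1) := by omega
          have hh2 : ¬ (i + 1 ≤ 1) := by omega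
          simp only [hh1, hh2, if_false]
          have : i + 1 - 1 = (i - 1) + 1 := by omega
          rw [this]
          exact hGs'swap (i - 1) (by omega) (by omega)
end

section
/- Let G and G' be two realisations of the same bipartite degree sequence S with |E(G) △ E(G')| = 6. Then there exist pairwise distinct v_1, v_2, v_3 ∈ V and pairwise distinct u_1, u_2, u_3 ∈ U such that E(G) \ E(G') = {(v_1,u_1), (v_2,u_2), (v_3,u_3)} and E(G') \ E(G) = {(v_2,u_1), (v_3,u_2), (v_1,u_3)}; that is, the symmetric difference forms a vertex-disjoint alternating 6-cycle. -/
open Finset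

/-- Splitting a filtered card along `Y`. -/
lemma filter_card_split {α : Type*} [DecidableEq α] (X Y : Finset α)
    (P : α → Prop) [DecidablePred P] :
    (X.filter P).card = ((X ∩ Y).filter P).card + ((X \ Y).filter P).card := by
  have hdisj : Disjoint ((X ∩ Y).filter P) ((X \ Y).filter P) := by
    rw [Finset.disjoint_left]
    intro p hp hp'
    simp only [Finset.mem_filter, Finset.mem_inter, Finset.mem_sdiff] at hp hp'
    exact hp'.1.2 hp.1.2
  have hXY : X ∩ Y ∪ X \ Y = X := by
    rw [← Finset.sup_eq_union, ← Finset.inf_eq_inter]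
    exact sup_inf_sdiff X Y
  conv_lhs => rw [← hXY]
  rw [Finset.filter_union, Finset.card_union_of_disjoint hdisj]

/-- No two distinct edges of `D` share a first coordinate. -/
lemma row_inj {α β : Type*} [DecidableEq α] [DecidableEq β]
    (D D' : Finset (α × β)) (hdisj : Disjoint D D')
    (hrow : ∀ i : α, (D.filter fun p => p.1 = i).card = (D'.filter fun p => p.1 = i).card)
    (hcol : ∀ j : β, (D.filter fun p => p.2 = j).card = (D'.filter fun p => p.2 = j).card)
    (hD' : D'.card = 3) :
    ∀ e₁ ∈ D, ∀ e₂ ∈ D, e₁.1 = e₂.1 → e₁ = e₂ := by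
  rintro ⟨v, x⟩ h1 ⟨v', y⟩ h2 h
  dsimp only at h
  subst h
  by_contra hne
  have hxy : x ≠ y := fun hh => hne (by rw [hh])
  -- an edge of D' in column x
  have hx1 : 0 < (D'.filter fun p => p.2 = x).card := by
    rw [← hcol]
    exact Finset.card_pos.2 ⟨(v, x), Finset.mem_filter.2 ⟨h1, rfl⟩⟩
  obtain ⟨f, hf⟩ := Finset.card_pos.1 hx1
  obtain ⟨hfD, hfx⟩ := Finset.mem_filter.1 hf
  -- an edge of D' in column y
  have hy1 : 0 < (D'.filter fun p => p.2 = y).card := by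
    rw [← hcol]
    exact Finset.card_pos.2 ⟨(v, y), Finset.mem_filter.2 ⟨h2, rfl⟩⟩
  obtain ⟨g, hg⟩ := Finset.card_pos.1 hy1
  obtain ⟨hgD, hgy⟩ := Finset.mem_filter.1 hg
  have hfv : f.1 ≠ v := by
    intro hh
    have : f = (v, x) := Prod.ext hh hfx
    exact Finset.disjoint_left.1 hdisj h1 (this ▸ hfD)
  have hgv : g.1 ≠ v := by
    intro hh
    have : g = (v, y) := Prod.ext hh hgy
    exact Finset.disjoint_left.1 hdisj h2 (this ▸ hgD)
  have hfg : f ≠ g := by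
    intro hh
    exact hxy (by rw [← hfx, hh, hgy])
  have h2le : 2 ≤ (D'.filter fun p => p.1 = v).card := by
    rw [← hrow]
    refine Finset.one_lt_card.2 ⟨(v, x), Finset.mem_filter.2 ⟨h1, rfl⟩,
      (v, y), Finset.mem_filter.2 ⟨h2, rfl⟩, ?_⟩
    simp [hxy]
  have h2le' : 2 ≤ (D'.filter fun p => ¬ p.1 = v).card :=
    Finset.one_lt_card.2 ⟨f, Finset.mem_filter.2 ⟨hfD, hfv⟩,
      g, Finset.mem_filter.2 ⟨hgD, hgv⟩, hfg⟩
  have hsum := Finset.card_filter_add_card_filter_not (s := D')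
    (p := fun p => p.1 = v)
  omega

/-- No two distinct edges of `D` share a second coordinate. -/
lemma col_inj {α β : Type*} [DecidableEq α] [DecidableEq β]
    (D D' : Finset (α × β)) (hdisj : Disjoint D D')
    (hrow : ∀ i : α, (D.filter fun p => p.1 = i).card = (D'.filter fun p => p.1 = i).card)
    (hcol : ∀ j : β, (D.filter fun p => p.2 = j).card = (D'.filter fun p => p.2 = j).card)
    (hD' : D'.card = 3) :
    ∀ e₁ ∈ D, ∀ e₂ ∈ D, e₁.2 = e₂.2 → e₁ = e₂ := by
  rintro ⟨x, u⟩ h1 ⟨y, u'⟩ h2 h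
  dsimp only at h
  subst h
  by_contra hne
  have hxy : x ≠ y := fun hh => hne (by rw [hh])
  have hx1 : 0 < (D'.filter fun p => p.1 = x).card := by
    rw [← hrow]
    exact Finset.card_pos.2 ⟨(x, u), Finset.mem_filter.2 ⟨h1, rfl⟩⟩
  obtain ⟨f, hf⟩ := Finset.card_pos.1 hx1
  obtain ⟨hfD, hfx⟩ := Finset.mem_filter.1 hf
  have hy1 : 0 < (D'.filter fun p => p.1 = y).card := by
    rw [← hrow]
    exact Finset.card_pos.2 ⟨(y, u), Finset.mem_filter.2 ⟨h2, rfl⟩⟩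
  obtain ⟨g, hg⟩ := Finset.card_pos.1 hy1
  obtain ⟨hgD, hgy⟩ := Finset.mem_filter.1 hg
  have hfv : f.2 ≠ u := by
    intro hh
    have : f = (x, u) := Prod.ext hfx hh
    exact Finset.disjoint_left.1 hdisj h1 (this ▸ hfD)
  have hgv : g.2 ≠ u := by
    intro hh
    have : g = (y, u) := Prod.ext hgy hh
    exact Finset.disjoint_left.1 hdisj h2 (this ▸ hgD)
  have hfg : f ≠ g := by
    intro hh
    exact hxy (by rw [← hfx, hh, hgy])
  have h2le : 2 ≤ (D'.filter fun p => p.2 = u).card := by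
    rw [← hcol]
    refine Finset.one_lt_card.2 ⟨(x, u), Finset.mem_filter.2 ⟨h1, rfl⟩,
      (y, u), Finset.mem_filter.2 ⟨h2, rfl⟩, ?_⟩
    simp [hxy]
  have h2le' : 2 ≤ (D'.filter fun p => ¬ p.2 = u).card :=
    Finset.one_lt_card.2 ⟨f, Finset.mem_filter.2 ⟨hfD, hfv⟩,
      g, Finset.mem_filter.2 ⟨hgD, hgv⟩, hfg⟩
  have hsum := Finset.card_filter_add_card_filter_not (s := D')
    (p := fun p => p.2 = u)
  omega

/-- The combinatorial core: two disjoint 3-edge sets with equal row and column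
counts form an alternating 6-cycle. -/
lemma core {α β : Type*} [DecidableEq α] [DecidableEq β]
    (D D' : Finset (α × β)) (hdisj : Disjoint D D')
    (hrow : ∀ i : α, (D.filter fun p => p.1 = i).card = (D'.filter fun p => p.1 = i).card)
    (hcol : ∀ j : β, (D.filter fun p => p.2 = j).card = (D'.filter fun p => p.2 = j).card)
    (hD : D.card = 3) (hD' : D'.card = 3) :
    ∃ (v₁ v₂ v₃ : α) (u₁ u₂ u₃ : β),
      v₁ ≠ v₂ ∧ v₁ ≠ v₃ ∧ v₂ ≠ v₃ ∧ u₁ ≠ u₂ ∧ u₁ ≠ u₃ ∧ u₂ ≠ u₃ ∧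
      D = {(v₁, u₁), (v₂, u₂), (v₃, u₃)} ∧
      D' = {(v₂, u₁), (v₃, u₂), (v₁, u₃)} := by
  have rinj := row_inj D D' hdisj hrow hcol hD'
  have cinj := col_inj D D' hdisj hrow hcol hD'
  obtain ⟨e₁, e₂, e₃, h12, h13, h23, hDeq⟩ := Finset.card_eq_three.1 hD
  obtain ⟨v₁, u₁⟩ := e₁
  obtain ⟨v₂, u₂⟩ := e₂
  obtain ⟨v₃, u₃⟩ := e₃
  have he₁ : (v₁, u₁) ∈ D := by rw [hDeq]; simp
  have he₂ : (v₂, u₂) ∈ D := by rw [hDeq]; simp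
  have he₃ : (v₃, u₃) ∈ D := by rw [hDeq]; simp
  have hv12 : v₁ ≠ v₂ := fun h => h12 (rinj _ he₁ _ he₂ h)
  have hv13 : v₁ ≠ v₃ := fun h => h13 (rinj _ he₁ _ he₃ h)
  have hv23 : v₂ ≠ v₃ := fun h => h23 (rinj _ he₂ _ he₃ h)
  have hu12 : u₁ ≠ u₂ := fun h => h12 (cinj _ he₁ _ he₂ h)
  have hu13 : u₁ ≠ u₃ := fun h => h13 (cinj _ he₁ _ he₃ h)
  have hu23 : u₂ ≠ u₃ := fun h => h23 (cinj _ he₂ _ he₃ h)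
  -- extract the unique edge of D' in each row v₁, v₂, v₃
  have hrowone : ∀ (v : α) (u : β), (v, u) ∈ D →
      ∃ c : β, (v, c) ∈ D' ∧ ∀ p ∈ D', p.1 = v → p = (v, c) := by
    intro v u hvu
    have hpos : 0 < (D'.filter fun p => p.1 = v).card := by
      rw [← hrow]
      exact Finset.card_pos.2 ⟨(v, u), Finset.mem_filter.2 ⟨hvu, rfl⟩⟩
    obtain ⟨f, hf⟩ := Finset.card_pos.1 hpos
    obtain ⟨hfD, hfv⟩ := Finset.mem_filter.1 hf
    refine ⟨f.2, by rwa [← hfv, Prod.mk.eta], ?_⟩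
    intro p hp hpv
    have hle : (D'.filter fun q => q.1 = v).card ≤ 1 := by
      rw [← hrow]
      refine Finset.card_le_one.2 ?_
      intro q1 hq1 q2 hq2
      obtain ⟨hq1D, hq1v⟩ := Finset.mem_filter.1 hq1
      obtain ⟨hq2D, hq2v⟩ := Finset.mem_filter.1 hq2
      exact rinj _ hq1D _ hq2D (by rw [hq1v, hq2v])
    have hpf : p = f := by
      have := Finset.card_le_one.1 hle p (Finset.mem_filter.2 ⟨hp, hpv⟩) f hf
      exact this
    rw [hpf, ← hfv, Prod.mk.eta]
  obtain ⟨c₁, hf₁D, hf₁u⟩ := hrowone v₁ u₁ he₁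
  obtain ⟨c₂, hf₂D, hf₂u⟩ := hrowone v₂ u₂ he₂
  obtain ⟨c₃, hf₃D, hf₃u⟩ := hrowone v₃ u₃ he₃
  -- D' = {(v₁,c₁),(v₂,c₂),(v₃,c₃)}
  have hD'eq : D' = {(v₁, c₁), (v₂, c₂), (v₃, c₃)} := by
    apply Finset.eq_of_subset_of_card_le
    · -- this direction needs every edge of D' to be one of the three
      intro p hp
      have hprow : ∃ q ∈ D, q.1 = p.1 := by
        have hpos : 0 < (D.filter fun q => q.1 = p.1).card := by
          rw [hrow]
          exact Finset.card_pos.2 ⟨p, Finset.mem_filter.2 ⟨hp, rfl⟩⟩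
        obtain ⟨q, hq⟩ := Finset.card_pos.1 hpos
        obtain ⟨hqD, hqv⟩ := Finset.mem_filter.1 hq
        exact ⟨q, hqD, hqv⟩
      obtain ⟨q, hqD, hqv⟩ := hprow
      rw [hDeq] at hqD
      simp only [Finset.mem_insert, Finset.mem_singleton] at hqD
      simp only [Finset.mem_insert, Finset.mem_singleton]
      rcases hqD with h | h | h
      · exact Or.inl (hf₁u p hp (by rw [← hqv, h]))
      · exact Or.inr (Or.inl (hf₂u p hp (by rw [← hqv, h])))
      · exact Or.inr (Or.inr (hf₃u p hp (by rw [← hqv, h])))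
    · rw [hD']
      apply le_trans (Finset.card_insert_le _ _)
      have := Finset.card_insert_le (v₂, c₂) ({(v₃, c₃)} : Finset (α × β))
      simp at this ⊢
      omega
  -- columns of D' are among {u₁,u₂,u₃}
  have hcolmem : ∀ p ∈ D', p.2 = u₁ ∨ p.2 = u₂ ∨ p.2 = u₃ := by
    intro p hp
    have hpos : 0 < (D.filter fun q => q.2 = p.2).card := by
      rw [hcol]
      exact Finset.card_pos.2 ⟨p, Finset.mem_filter.2 ⟨hp, rfl⟩⟩
    obtain ⟨q, hq⟩ := Finset.card_pos.1 hpos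
    obtain ⟨hqD, hqv⟩ := Finset.mem_filter.1 hq
    rw [hDeq] at hqD
    simp only [Finset.mem_insert, Finset.mem_singleton] at hqD
    rcases hqD with h | h | h
    · exact Or.inl (by rw [← hqv, h])
    · exact Or.inr (Or.inl (by rw [← hqv, h]))
    · exact Or.inr (Or.inr (by rw [← hqv, h]))
  have hc₁mem := hcolmem _ hf₁D
  have hc₂mem := hcolmem _ hf₂D
  have hc₃mem := hcolmem _ hf₃D
  dsimp only at hc₁mem hc₂mem hc₃mem
  -- c_i avoids u_i
  have hc₁ : c₁ ≠ u₁ := by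
    intro h
    exact Finset.disjoint_left.1 hdisj he₁ (by rw [← h]; exact hf₁D)
  have hc₂ : c₂ ≠ u₂ := by
    intro h
    exact Finset.disjoint_left.1 hdisj he₂ (by rw [← h]; exact hf₂D)
  have hc₃ : c₃ ≠ u₃ := by
    intro h
    exact Finset.disjoint_left.1 hdisj he₃ (by rw [← h]; exact hf₃D)
  -- c's pairwise distinct, via column counts
  have hcdist : ∀ (x y : α) (c : β), x ≠ y → (x, c) ∈ D' → (y, c) ∈ D' → False := by
    intro x y c hxy hx hy
    have h2 : 2 ≤ (D'.filter fun p => p.2 = c).card := by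
      refine Finset.one_lt_card.2 ⟨(x, c), Finset.mem_filter.2 ⟨hx, rfl⟩,
        (y, c), Finset.mem_filter.2 ⟨hy, rfl⟩, by simp [hxy]⟩
    rw [← hcol] at h2
    have hle : (D.filter fun p => p.2 = c).card ≤ 1 := by
      refine Finset.card_le_one.2 ?_
      intro q1 hq1 q2 hq2
      obtain ⟨hq1D, hq1v⟩ := Finset.mem_filter.1 hq1
      obtain ⟨hq2D, hq2v⟩ := Finset.mem_filter.1 hq2
      exact cinj _ hq1D _ hq2D (by rw [hq1v, hq2v])
    omega
  have hc12 : c₁ ≠ c₂ := fun h => hcdist v₁ v₂ c₁ hv12 hf₁D (h ▸ hf₂D)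
  have hc13 : c₁ ≠ c₃ := fun h => hcdist v₁ v₃ c₁ hv13 hf₁D (h ▸ hf₃D)
  have hc23 : c₂ ≠ c₃ := fun h => hcdist v₂ v₃ c₂ hv23 hf₂D (h ▸ hf₃D)
  -- case analysis on c₁
  rcases hc₁mem with h1 | h1 | h1
  · exact absurd h1 hc₁
  · -- c₁ = u₂ : then c₂ = u₃, c₃ = u₁
    rcases hc₂mem with h2 | h2 | h2
    · exfalso
      rcases hc₃mem with h3 | h3 | h3
      · exact hc23 (h2.trans h3.symm)
      · exact hc13 (h1.trans h3.symm)
      · exact hc₃ h3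
    · exact absurd h2 hc₂
    · have h3 : c₃ = u₁ := by
        rcases hc₃mem with h3 | h3 | h3
        · exact h3
        · exact absurd (h1.trans h3.symm) hc13
        · exact absurd h3 hc₃
      refine ⟨v₁, v₃, v₂, u₁, u₃, u₂, hv13, hv12, fun hh => hv23 hh.symm,
        hu13, hu12, fun hh => hu23 hh.symm, ?_, ?_⟩
      · rw [hDeq, Finset.pair_comm (v₂, u₂) (v₃, u₃)]
      · rw [hD'eq, h1, h2, h3, Finset.insert_comm (v₁, u₂) (v₂, u₃),
          Finset.pair_comm (v₁, u₂) (v₃, u₁), Finset.insert_comm (v₂, u₃) (v₃, u₁)]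
  · -- c₁ = u₃ : then c₂ = u₁, c₃ = u₂
    have h2 : c₂ = u₁ := by
      rcases hc₂mem with h2 | h2 | h2
      · exact h2
      · exact absurd h2 hc₂
      · exact absurd (h1.trans h2.symm) hc12
    have h3 : c₃ = u₂ := by
      rcases hc₃mem with h3 | h3 | h3
      · exact absurd (h2.trans h3.symm) hc23
      · exact h3
      · exact absurd h3 hc₃
    refine ⟨v₁, v₂, v₃, u₁, u₂, u₃, hv12, hv13, hv23, hu12, hu13, hu23, hDeq, ?_⟩
    rw [hD'eq, h1, h2, h3, Finset.insert_comm (v₁, u₃) (v₂, u₁),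
      Finset.pair_comm (v₁, u₃) (v₃, u₂)]

/-- if `G` and `G'` are realisations of the same bipartite degree
sequence with `|E(G) △ E(G')| = 6`, then the symmetric difference is a
vertex-disjoint alternating 6-cycle: there are pairwise distinct `v₁, v₂, v₃` and
pairwise distinct `u₁, u₂, u₃` with `G \ G' = {(v₁,u₁), (v₂,u₂), (v₃,u₃)}` and
`G' \ G = {(v₂,u₁), (v₃,u₂), (v₁,u₃)}`. -/
theorem stmt15 {n n' : ℕ} (a : Fin n → ℕ) (b : Fin n' → ℕ)
    (G G' : Finset (Fin n × Fin n'))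
    (hG : IsRealisation a b G) (hG' : IsRealisation a b G')
    (hcard : (symmDiff G G').card = 6) :
    ∃ (v₁ v₂ v₃ : Fin n) (u₁ u₂ u₃ : Fin n'),
      v₁ ≠ v₂ ∧ v₁ ≠ v₃ ∧ v₂ ≠ v₃ ∧ u₁ ≠ u₂ ∧ u₁ ≠ u₃ ∧ u₂ ≠ u₃ ∧
      G \ G' = {(v₁, u₁), (v₂, u₂), (v₃, u₃)} ∧
      G' \ G = {(v₂, u₁), (v₃, u₂), (v₁, u₃)} := by
  have hdisj : Disjoint (G \ G') (G' \ G) := disjoint_sdiff_sdiff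
  have hrow : ∀ i : Fin n,
      ((G \ G').filter fun p => p.1 = i).card = ((G' \ G).filter fun p => p.1 = i).card := by
    intro i
    have h1 := filter_card_split G G' (fun p => p.1 = i)
    have h2 := filter_card_split G' G (fun p => p.1 = i)
    rw [Finset.inter_comm G' G] at h2
    have ha := hG.1 i
    have ha' := hG'.1 i
    omega
  have hcol : ∀ j : Fin n',
      ((G \ G').filter fun p => p.2 = j).card = ((G' \ G).filter fun p => p.2 = j).card := by
    intro j
    have h1 := filter_card_split G G' (fun p => p.2 = j)
    have h2 := filter_card_split G' G (fun p => p.2 = j)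
    rw [Finset.inter_comm G' G] at h2
    have hb := hG.2 j
    have hb' := hG'.2 j
    omega
  have hDD' : (G \ G').card = (G' \ G).card := by
    rw [Finset.card_eq_sum_card_fiberwise (s := G \ G') (f := Prod.fst) (t := Finset.univ)
        (fun x _ => Finset.mem_univ _),
      Finset.card_eq_sum_card_fiberwise (s := G' \ G) (f := Prod.fst) (t := Finset.univ)
        (fun x _ => Finset.mem_univ _)]
    exact Finset.sum_congr rfl fun i _ => hrow i
  have hsym : symmDiff G G' = (G \ G') ∪ (G' \ G) := by
    rw [symmDiff_def]
    rfl
  rw [hsym, Finset.card_union_of_disjoint hdisj] at hcard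
  have hD3 : (G \ G').card = 3 := by omega
  have hD'3 : (G' \ G).card = 3 := by omega
  exact core (G \ G') (G' \ G) hdisj hrow hcol hD3 hD'3
end

section
/- Let ℓ ≥ 4 and suppose the fixed set F = F_E ∪ F_N contains no cycle of length 2ℓ, and that there exist at least two distinct F-fixed realisations of the bipartite degree sequence S. Then every F-fixed realisation G of S admits a j-swap for some even j with 4 ≤ j ≤ 2ℓ − 2: there exists an F-fixed realisation G' of S obtained from G by such a j-swap. -/
/-- `F ⊆ V × U` contains a cycle of length `2 * m`: there are distinct
`x 0, …, x (m-1)` in `V` and distinct `y 0, …, y (m-1)` in `U` with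
`(x s, y s) ∈ F` and `(x (s+1 mod m), y s) ∈ F` for all `s < m`. -/
def HasCycleOfLength {n n' : ℕ} (F : Finset (Fin n × Fin n')) (m : ℕ) : Prop :=
  ∃ (x : ℕ → Fin n) (y : ℕ → Fin n'),
    (∀ s < m, ∀ t < m, x s = x t → s = t) ∧
    (∀ s < m, ∀ t < m, y s = y t → s = t) ∧
    (∀ s < m, (x s, y s) ∈ F ∧ (x ((s + 1) % m), y s) ∈ F)

section SwapAux
open Finset
variable {n n' : ℕ}

def GoodCycle (G FE FN : Finset (Fin n × Fin n')) (m : ℕ)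
    (v : ℕ → Fin n) (u : ℕ → Fin n') : Prop :=
  (∀ s < m, ∀ t < m, v s = v t → s = t) ∧
  (∀ s < m, ∀ t < m, u s = u t → s = t) ∧
  (∀ s < m, (v s, u s) ∈ G ∧ (v s, u s) ∉ FE ∧
    (v ((s + 1) % m), u s) ∉ G ∧ (v ((s + 1) % m), u s) ∉ FN)


lemma mod_cancel {s t c m : ℕ} (hs : s < m) (ht : t < m)
    (h : (s + c) % m = (t + c) % m) : s = t := by
  have h1 : s % m = t % m := Nat.ModEq.add_right_cancel' c h
  rwa [Nat.mod_eq_of_lt hs, Nat.mod_eq_of_lt ht] at h1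


/-- Rotating a good cycle. -/
lemma GoodCycle.rotate {G FE FN : Finset (Fin n × Fin n')} {m : ℕ}
    {v : ℕ → Fin n} {u : ℕ → Fin n'} (h : GoodCycle G FE FN m v u) (c : ℕ) :
    GoodCycle G FE FN m (fun t => v ((t + c) % m)) (fun t => u ((t + c) % m)) := by
  obtain ⟨hv, hu, he⟩ := h
  refine ⟨?_, ?_, ?_⟩
  · intro s hs t ht hst
    have hm : 0 < m := lt_of_le_of_lt (Nat.zero_le s) hs
    exact mod_cancel hs ht
      (hv _ (Nat.mod_lt _ hm) _ (Nat.mod_lt _ hm) hst)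
  · intro s hs t ht hst
    have hm : 0 < m := lt_of_le_of_lt (Nat.zero_le s) hs
    exact mod_cancel hs ht
      (hu _ (Nat.mod_lt _ hm) _ (Nat.mod_lt _ hm) hst)
  · intro s hs
    have hm : 0 < m := lt_of_le_of_lt (Nat.zero_le s) hs
    have hkey : ((s + 1) % m + c) % m = ((s + c) % m + 1) % m := by
      rw [Nat.mod_add_mod, Nat.mod_add_mod]; ring_nf
    obtain ⟨h1, h2, h3, h4⟩ := he ((s + c) % m) (Nat.mod_lt _ hm)
    simp only [hkey]
    exact ⟨h1, h2, h3, h4⟩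


lemma good_swap {a : Fin n → ℕ} {b : Fin n' → ℕ} {G FE FN : Finset (Fin n × Fin n')}
    (hG : (∀ i : Fin n, (G.filter fun p => p.1 = i).card = a i) ∧
      (∀ j : Fin n', (G.filter fun p => p.2 = j).card = b j))
    (hFE : FE ⊆ G) (hFN : FN ∩ G = ∅)
    {m : ℕ} {v : ℕ → Fin n} {u : ℕ → Fin n'}
    (hm : 2 ≤ m) (hc : GoodCycle G FE FN m v u) :
    ∃ G' : Finset (Fin n × Fin n'),
      ((∀ i : Fin n, (G'.filter fun p => p.1 = i).card = a i) ∧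
        (∀ j : Fin n', (G'.filter fun p => p.2 = j).card = b j)) ∧
      FE ⊆ G' ∧ FN ∩ G' = ∅ ∧
      G \ G' = (range m).image (fun s => (v s, u s)) ∧
      G' \ G = (range m).image (fun s => (v ((s + 1) % m), u s)) := by
  obtain ⟨hv, hu, he⟩ := hc
  have hm0 : 0 < m := by omega
  set D : Finset (Fin n × Fin n') := (range m).image (fun s => (v s, u s)) with hD
  set A : Finset (Fin n × Fin n') := (range m).image (fun s => (v ((s + 1) % m), u s)) with hA
  have hDmem : ∀ p ∈ D, p ∈ G ∧ p ∉ FE := by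
    intro p hp
    simp only [hD, mem_image, mem_range] at hp
    obtain ⟨s, hs, rfl⟩ := hp
    exact ⟨(he s hs).1, (he s hs).2.1⟩
  have hAmem : ∀ p ∈ A, p ∉ G ∧ p ∉ FN := by
    intro p hp
    simp only [hA, mem_image, mem_range] at hp
    obtain ⟨s, hs, rfl⟩ := hp
    exact ⟨(he s hs).2.2.1, (he s hs).2.2.2⟩
  have hDG : D ⊆ G := fun p hp => (hDmem p hp).1
  have hcard : ∀ (P : Fin n × Fin n' → Prop) [DecidablePred P],
      (D.filter P).card ≤ (G.filter P).card ∧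
      (((G \ D) ∪ A).filter P).card
        = (G.filter P).card - (D.filter P).card + (A.filter P).card := by
    intro P _
    have hYX : D.filter P ⊆ G.filter P := filter_subset_filter _ hDG
    have e1 : ((G \ D) ∪ A).filter P = ((G.filter P) \ (D.filter P)) ∪ (A.filter P) := by
      ext p
      simp only [mem_filter, mem_sdiff, mem_union]
      tauto
    have hdisjZ : Disjoint ((G.filter P) \ (D.filter P)) (A.filter P) := by
      rw [Finset.disjoint_right]
      intro p hpA hpG
      exact (hAmem p (mem_of_mem_filter p hpA)).1
        (mem_of_mem_filter p (mem_sdiff.1 hpG).1)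
    rw [e1, card_union_of_disjoint hdisjZ, card_sdiff_of_subset hYX]
    exact ⟨card_le_card hYX, rfl⟩
  -- counts of D and A by rows/columns
  have hDrow : ∀ i : Fin n, (D.filter fun p => p.1 = i).card
      = ((range m).filter fun s => v s = i).card := by
    intro i
    rw [hD, Finset.filter_image]
    exact card_image_of_injOn (fun s hs t ht hst =>
      hv s (mem_range.1 (mem_filter.1 hs).1) t (mem_range.1 (mem_filter.1 ht).1)
        (congrArg Prod.fst hst))
  have hArow : ∀ i : Fin n, (A.filter fun p => p.1 = i).card
      = ((range m).filter fun s => v ((s + 1) % m) = i).card := by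
    intro i
    rw [hA, Finset.filter_image]
    exact card_image_of_injOn (fun s hs t ht hst =>
      hu s (mem_range.1 (mem_filter.1 hs).1) t (mem_range.1 (mem_filter.1 ht).1)
        (congrArg Prod.snd hst))
  have hrowEq : ∀ i : Fin n, (D.filter fun p => p.1 = i).card
      = (A.filter fun p => p.1 = i).card := by
    intro i
    rw [hDrow, hArow]
    refine (Finset.card_bij (fun s _ => (s + 1) % m) ?_ ?_ ?_).symm
    · intro s hs
      simp only [mem_filter, mem_range] at hs ⊢
      exact ⟨Nat.mod_lt _ hm0, hs.2⟩
    · intro s hs t ht hst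
      simp only [mem_filter, mem_range] at hs ht
      exact mod_cancel hs.1 ht.1 hst
    · intro t ht
      simp only [mem_filter, mem_range] at ht
      refine ⟨(t + (m - 1)) % m, ?_, ?_⟩
      · have key : ((t + (m - 1)) % m + 1) % m = t := by
          rw [Nat.mod_add_mod]
          have : t + (m - 1) + 1 = t + m := by omega
          rw [this, Nat.add_mod_right, Nat.mod_eq_of_lt ht.1]
        simp only [mem_filter, mem_range]
        exact ⟨Nat.mod_lt _ hm0, by rw [key]; exact ht.2⟩
      · show ((t + (m - 1)) % m + 1) % m = t
        rw [Nat.mod_add_mod]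
        have : t + (m - 1) + 1 = t + m := by omega
        rw [this, Nat.add_mod_right, Nat.mod_eq_of_lt ht.1]
  have hcolEq : ∀ j : Fin n', (D.filter fun p => p.2 = j).card
      = (A.filter fun p => p.2 = j).card := by
    intro j
    rw [hD, hA, Finset.filter_image, Finset.filter_image]
    rw [card_image_of_injOn (fun s hs t ht hst =>
      hu s (mem_range.1 (mem_filter.1 hs).1) t (mem_range.1 (mem_filter.1 ht).1)
        (congrArg Prod.snd hst)),
      card_image_of_injOn (fun s hs t ht hst =>
      hu s (mem_range.1 (mem_filter.1 hs).1) t (mem_range.1 (mem_filter.1 ht).1)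
        (congrArg Prod.snd hst))]
  refine ⟨(G \ D) ∪ A, ⟨?_, ?_⟩, ?_, ?_, ?_, ?_⟩
  · intro i
    obtain ⟨hle, hcd⟩ := hcard (fun p => p.1 = i)
    rw [hcd, ← hrowEq i]
    have := hG.1 i
    omega
  · intro j
    obtain ⟨hle, hcd⟩ := hcard (fun p => p.2 = j)
    rw [hcd, ← hcolEq j]
    have := hG.2 j
    omega
  · intro p hp
    exact Finset.mem_union.2 (Or.inl (Finset.mem_sdiff.2
      ⟨hFE hp, fun hpD => (hDmem p hpD).2 hp⟩))
  · rw [Finset.eq_empty_iff_forall_notMem]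
    intro p hp
    obtain ⟨hpN, hpG'⟩ := Finset.mem_inter.1 hp
    rcases Finset.mem_union.1 hpG' with h | h
    · exact Finset.eq_empty_iff_forall_notMem.1 hFN p
        (Finset.mem_inter.2 ⟨hpN, (Finset.mem_sdiff.1 h).1⟩)
    · exact (hAmem p h).2 hpN
  · ext p
    simp only [mem_sdiff, mem_union]
    constructor
    · rintro ⟨hpG, hnot⟩
      by_contra hpD
      exact hnot (Or.inl ⟨hpG, hpD⟩)
    · intro hpD
      refine ⟨hDG hpD, ?_⟩
      rintro (h | h)
      · exact h.2 hpD
      · exact (hAmem p h).1 (hDG hpD)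
  · ext p
    simp only [mem_sdiff, mem_union]
    constructor
    · rintro ⟨h | h, hpG⟩
      · exact absurd h.1 hpG
      · exact h
    · intro hpA
      exact ⟨Or.inr hpA, (hAmem p hpA).1⟩

lemma exists_goodCycle {a : Fin n → ℕ} {b : Fin n' → ℕ} {G H FE FN : Finset (Fin n × Fin n')}
    (hGr : (∀ i : Fin n, (G.filter fun p => p.1 = i).card = a i) ∧
      (∀ j : Fin n', (G.filter fun p => p.2 = j).card = b j))
    (hHr : (∀ i : Fin n, (H.filter fun p => p.1 = i).card = a i) ∧
      (∀ j : Fin n', (H.filter fun p => p.2 = j).card = b j))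
    (hFEH : FE ⊆ H) (hFNH : FN ∩ H = ∅) (hne : G ≠ H) :
    ∃ m v u, 2 ≤ m ∧ GoodCycle G FE FN m v u := by
  classical
  set D₁ : Finset (Fin n × Fin n') := G \ H with hD₁
  set D₂ : Finset (Fin n × Fin n') := H \ G with hD₂
  -- balance of filtered cards
  have split : ∀ (X Y : Finset (Fin n × Fin n')) (P : Fin n × Fin n' → Prop)
      [DecidablePred P],
      (X.filter P).card = ((X \ Y).filter P).card + ((X ∩ Y).filter P).card := by
    intro X Y P _
    rw [← card_union_of_disjoint, ← filter_union, sdiff_union_inter]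
    exact disjoint_filter_filter (disjoint_sdiff_inter X Y)
  have balance : ∀ (P : Fin n × Fin n' → Prop) [DecidablePred P],
      (G.filter P).card = (H.filter P).card →
      (D₁.filter P).card = (D₂.filter P).card := by
    intro P _ h
    have h1 := split G H P
    have h2 := split H G P
    rw [inter_comm H G] at h2
    simp only [hD₁, hD₂]
    omega
  have balRow : ∀ i : Fin n, ((D₁.filter fun p => p.1 = i)).card
      = ((D₂.filter fun p => p.1 = i)).card := fun i =>
    balance _ (by rw [hGr.1 i, hHr.1 i])
  have balCol : ∀ j : Fin n', ((D₁.filter fun p => p.2 = j)).card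
      = ((D₂.filter fun p => p.2 = j)).card := fun j =>
    balance _ (by rw [hGr.2 j, hHr.2 j])
  -- D₁ nonempty
  have hD₁ne : D₁.Nonempty := by
    rcases Finset.eq_empty_or_nonempty D₁ with h | h
    · exfalso
      have hGH : G ⊆ H := by rwa [← Finset.sdiff_eq_empty_iff_subset]
      have hHGne : D₂.Nonempty := by
        rw [Finset.sdiff_nonempty]
        intro hHG
        exact hne (Finset.Subset.antisymm hGH hHG)
      obtain ⟨p, hp⟩ := hHGne
      have : 0 < (D₂.filter fun q => q.2 = p.2).card :=
        Finset.card_pos.2 ⟨p, mem_filter.2 ⟨hp, rfl⟩⟩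
      rw [← balCol p.2] at this
      obtain ⟨q, hq⟩ := Finset.card_pos.1 this
      rw [h] at hq
      simp at hq
    · exact h
  -- step lemmas
  have claimA : ∀ p ∈ D₁, ∃ w, (w, p.2) ∈ D₂ := by
    intro p hp
    have : 0 < (D₂.filter fun q => q.2 = p.2).card := by
      rw [← balCol p.2]
      exact Finset.card_pos.2 ⟨p, mem_filter.2 ⟨hp, rfl⟩⟩
    obtain ⟨q, hq⟩ := Finset.card_pos.1 this
    obtain ⟨hq1, hq2⟩ := mem_filter.1 hq
    exact ⟨q.1, by rwa [← hq2]⟩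
  have claimB : ∀ p ∈ D₂, ∃ z, (p.1, z) ∈ D₁ := by
    intro p hp
    have : 0 < (D₁.filter fun q => q.1 = p.1).card := by
      rw [balRow p.1]
      exact Finset.card_pos.2 ⟨p, mem_filter.2 ⟨hp, rfl⟩⟩
    obtain ⟨q, hq⟩ := Finset.card_pos.1 this
    obtain ⟨hq1, hq2⟩ := mem_filter.1 hq
    exact ⟨q.2, by rwa [← hq2]⟩
  -- step function
  have stepEx : ∀ p : {p // p ∈ D₁}, ∃ q : {p // p ∈ D₁}, (q.1.1, p.1.2) ∈ D₂ := by
    rintro ⟨p, hp⟩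
    obtain ⟨w, hw⟩ := claimA p hp
    obtain ⟨z, hz⟩ := claimB (w, p.2) hw
    exact ⟨⟨(w, z), hz⟩, hw⟩
  choose step hstep using stepEx
  obtain ⟨p₀, hp₀⟩ := hD₁ne
  set g : ℕ → {p // p ∈ D₁} := fun t => step^[t] ⟨p₀, hp₀⟩ with hg
  set v : ℕ → Fin n := fun t => (g t).1.1 with hvdef
  set u : ℕ → Fin n' := fun t => (g t).1.2 with hudef
  have hinv1 : ∀ t, (v t, u t) ∈ D₁ := fun t => (g t).2
  have hinv2 : ∀ t, (v (t + 1), u t) ∈ D₂ := by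
    intro t
    have : g (t + 1) = step (g t) := Function.iterate_succ_apply' step t _
    have h2 := hstep (g t)
    rw [← this] at h2
    exact h2
  -- D₁ ∩ D₂ = ∅ elementwise
  have hdisj12 : ∀ p, p ∈ D₁ → p ∈ D₂ → False := by
    intro p h1 h2
    exact (Finset.mem_sdiff.1 h1).2 (Finset.mem_sdiff.1 h2).1
  -- pigeonhole: a repeat exists
  have hrep : ∃ t, 0 < t ∧ ((∃ r < t, v t = v r) ∨ (∃ r < t, u t = u r)) := by
    have hmaps : ∀ s ∈ Finset.range (n + 1), v s ∈ (Finset.univ : Finset (Fin n)) :=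
      fun s _ => Finset.mem_univ _
    have hcardlt : (Finset.univ : Finset (Fin n)).card < (Finset.range (n + 1)).card := by
      simp
    obtain ⟨s, hs, t, ht, hst, heq⟩ :=
      Finset.exists_ne_map_eq_of_card_lt_of_maps_to hcardlt hmaps
    rcases Nat.lt_or_ge s t with hlt | hge
    · exact ⟨t, by omega, Or.inl ⟨s, hlt, heq.symm⟩⟩
    · have : t < s := by omega
      exact ⟨s, by omega, Or.inl ⟨t, this, heq⟩⟩
  set T := Nat.find hrep with hT
  obtain ⟨hT0, hTrep⟩ := Nat.find_spec hrep
  have hmin : ∀ t < T, ∀ r < t, v t ≠ v r ∧ u t ≠ u r := by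
    intro t ht r hr
    have := Nat.find_min hrep ht
    push_neg at this
    rcases Nat.eq_zero_or_pos t with h0 | h0
    · omega
    · obtain ⟨h1, h2⟩ := this h0
      exact ⟨h1 r hr, h2 r hr⟩
  -- injectivity below T
  have hvinj : ∀ s < T, ∀ t < T, v s = v t → s = t := by
    intro s hs t ht hst
    by_contra hne'
    rcases Nat.lt_or_ge s t with h | h
    · exact (hmin t ht s h).1 hst.symm
    · have : t < s := by omega
      exact (hmin s hs t this).1 hst
  have huinj : ∀ s < T, ∀ t < T, u s = u t → s = t := by
    intro s hs t ht hst
    by_contra hne'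
    rcases Nat.lt_or_ge s t with h | h
    · exact (hmin t ht s h).2 hst.symm
    · have : t < s := by omega
      exact (hmin s hs t this).2 hst
  -- translate membership in D₁/D₂ to GoodCycle edge conditions
  have hD₁e : ∀ p : Fin n × Fin n', p ∈ D₁ → p ∈ G ∧ p ∉ FE := by
    intro p hp
    obtain ⟨h1, h2⟩ := Finset.mem_sdiff.1 hp
    exact ⟨h1, fun hpe => h2 (hFEH hpe)⟩
  have hD₂e : ∀ p : Fin n × Fin n', p ∈ D₂ → p ∉ G ∧ p ∉ FN := by
    intro p hp
    obtain ⟨h1, h2⟩ := Finset.mem_sdiff.1 hp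
    refine ⟨h2, fun hpn => ?_⟩
    exact Finset.eq_empty_iff_forall_notMem.1 hFNH p (Finset.mem_inter.2 ⟨hpn, h1⟩)
  rcases Classical.em (∃ r < T, v T = v r) with ⟨r, hr, hvr⟩ | hnov
  · -- v-repeat case
    have hrT2 : r + 2 ≤ T := by
      rcases Nat.lt_or_ge (r + 1) T with h | h
      · omega
      · exfalso
        have : r = T - 1 := by omega
        subst this
        have h1 := hinv1 (T - 1)
        have h2 := hinv2 (T - 1)
        rw [show T - 1 + 1 = T by omega] at h2
        rw [hvr] at h2
        exact hdisj12 _ h1 h2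
    set m := T - r with hmdef
    refine ⟨m, fun s => v (r + s), fun s => u (r + s), by omega, ?_, ?_, ?_⟩
    · intro s hs t ht hst
      have := hvinj (r + s) (by omega) (r + t) (by omega) hst
      omega
    · intro s hs t ht hst
      have := huinj (r + s) (by omega) (r + t) (by omega) hst
      omega
    · intro s hs
      refine ⟨(hD₁e _ (hinv1 (r + s))).1, (hD₁e _ (hinv1 (r + s))).2, ?_, ?_⟩ <;>
      · rcases Nat.lt_or_ge s (m - 1) with h | h
        · have hmod : (s + 1) % m = s + 1 := Nat.mod_eq_of_lt (by omega)
          rw [hmod]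
          have h2 := hinv2 (r + s)
          rw [show r + s + 1 = r + (s + 1) by omega] at h2
          first
          | exact (hD₂e _ h2).1
          | exact (hD₂e _ h2).2
        · have hseq : s = m - 1 := by omega
          have hmod : (s + 1) % m = 0 := by
            rw [hseq, show m - 1 + 1 = m by omega, Nat.mod_self]
          rw [hmod, hseq]
          beta_reduce
          have h2 := hinv2 (T - 1)
          rw [show T - 1 + 1 = T by omega, hvr] at h2
          rw [show r + 0 = r by omega, show r + (m - 1) = T - 1 by omega]
          first
          | exact (hD₂e _ h2).1
          | exact (hD₂e _ h2).2
  · -- u-repeat case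
    obtain ⟨r, hr, hur⟩ := hTrep.resolve_left hnov
    push_neg at hnov
    -- v injective on [0, T]
    have hvinj' : ∀ s ≤ T, ∀ t ≤ T, v s = v t → s = t := by
      intro s hs t ht hst
      rcases Nat.lt_or_ge s T with h1 | h1
      · rcases Nat.lt_or_ge t T with h2 | h2
        · exact hvinj s h1 t h2 hst
        · have : t = T := by omega
          subst this
          exact absurd hst.symm (hnov s h1)
      · have hsT : s = T := by omega
        subst hsT
        rcases Nat.lt_or_ge t T with h2 | h2
        · exact absurd hst (hnov t h2)
        · omega
    have hrT2 : r + 2 ≤ T := by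
      rcases Nat.lt_or_ge (r + 1) T with h | h
      · omega
      · exfalso
        have : r = T - 1 := by omega
        subst this
        have h1 := hinv1 T
        have h2 := hinv2 (T - 1)
        rw [show T - 1 + 1 = T by omega] at h2
        rw [hur] at h1
        exact hdisj12 _ h1 h2
    set m := T - r with hmdef
    refine ⟨m, fun s => v (r + 1 + s),
      fun s => if s = m - 1 then u r else u (r + 1 + s), by omega, ?_, ?_, ?_⟩
    · intro s hs t ht hst
      have := hvinj' (r + 1 + s) (by omega) (r + 1 + t) (by omega) hst
      omega
    · intro s hs t ht hst
      have hst' : (if s = m - 1 then u r else u (r + 1 + s))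
          = (if t = m - 1 then u r else u (r + 1 + t)) := hst
      by_cases h1 : s = m - 1 <;> by_cases h2 : t = m - 1
      · omega
      · rw [if_pos h1, if_neg h2] at hst'
        exfalso
        have := huinj r (by omega) (r + 1 + t) (by omega) hst'
        omega
      · rw [if_neg h1, if_pos h2] at hst'
        exfalso
        have := huinj (r + 1 + s) (by omega) r (by omega) hst'
        omega
      · rw [if_neg h1, if_neg h2] at hst'
        have := huinj (r + 1 + s) (by omega) (r + 1 + t) (by omega) hst'
        omega
    · intro s hs
      by_cases h1 : s = m - 1
      · beta_reduce
        rw [if_pos h1]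
        have hmod : (s + 1) % m = 0 := by
          rw [h1, show m - 1 + 1 = m by omega, Nat.mod_self]
        rw [hmod, h1]
        rw [show r + 1 + (m - 1) = T by omega, show r + 1 + 0 = r + 1 by omega]
        have e1 : (v T, u r) ∈ D₁ := by rw [← hur]; exact hinv1 T
        have e2 := hinv2 r
        exact ⟨(hD₁e _ e1).1, (hD₁e _ e1).2, (hD₂e _ e2).1, (hD₂e _ e2).2⟩
      · beta_reduce
        rw [if_neg h1]
        have hmod : (s + 1) % m = s + 1 := Nat.mod_eq_of_lt (by omega)
        rw [hmod]
        have e1 := hinv1 (r + 1 + s)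
        have e2 := hinv2 (r + 1 + s)
        rw [show r + 1 + s + 1 = r + 1 + (s + 1) by omega] at e2
        exact ⟨(hD₁e _ e1).1, (hD₁e _ e1).2, (hD₂e _ e2).1, (hD₂e _ e2).2⟩

lemma chord {G FE FN : Finset (Fin n × Fin n')} {m : ℕ} {v : ℕ → Fin n} {u : ℕ → Fin n'}
    (hc : GoodCycle G FE FN m v u)
    (hmin : ∀ m', 2 ≤ m' → m' < m → ∀ v' u', ¬ GoodCycle G FE FN m' v' u')
    {k : ℕ} (hk1 : 1 ≤ k) (hk2 : k ≤ m - 2) (hm3 : 3 ≤ m) :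
    (v 0, u k) ∈ FE ∪ FN := by
  classical
  obtain ⟨hv, hu, he⟩ := hc
  by_cases hg : (v 0, u k) ∈ G
  · by_cases hfe : (v 0, u k) ∈ FE
    · exact Finset.mem_union.2 (Or.inl hfe)
    · exfalso
      apply hmin (m - k) (by omega) (by omega)
        (fun s => if s = 0 then v 0 else v (k + s)) (fun s => u (k + s))
      refine ⟨?_, ?_, ?_⟩
      · intro s hs t ht hst
        have hst' : (if s = 0 then v 0 else v (k + s))
            = (if t = 0 then v 0 else v (k + t)) := hst
        by_cases h1 : s = 0 <;> by_cases h2 : t = 0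
        · omega
        · rw [if_pos h1, if_neg h2] at hst'
          have := hv 0 (by omega) (k + t) (by omega) hst'
          omega
        · rw [if_neg h1, if_pos h2] at hst'
          have := hv (k + s) (by omega) 0 (by omega) hst'
          omega
        · rw [if_neg h1, if_neg h2] at hst'
          have := hv (k + s) (by omega) (k + t) (by omega) hst'
          omega
      · intro s hs t ht hst
        have hst' : u (k + s) = u (k + t) := hst
        have := hu (k + s) (by omega) (k + t) (by omega) hst'
        omega
      · intro s hs
        by_cases h1 : s = 0
        · beta_reduce
          rw [if_pos h1, h1]
          have hmod : (0 + 1) % (m - k) = 1 := Nat.mod_eq_of_lt (by omega)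
          rw [hmod, if_neg one_ne_zero]
          have hnext := he k (by omega)
          have hmodm : (k + 1) % m = k + 1 := Nat.mod_eq_of_lt (by omega)
          rw [hmodm] at hnext
          exact ⟨by rw [show k + 0 = k by omega]; exact hg,
            by rw [show k + 0 = k by omega]; exact hfe,
            by rw [show k + 0 = k by omega]; exact hnext.2.2.1,
            by rw [show k + 0 = k by omega]; exact hnext.2.2.2⟩
        · beta_reduce
          rw [if_neg h1]
          have hks : k + s < m := by omega
          have hed := he (k + s) hks
          by_cases h2 : s = m - k - 1
          · have hmod : (s + 1) % (m - k) = 0 := by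
              rw [h2, show m - k - 1 + 1 = m - k by omega, Nat.mod_self]
            rw [hmod, if_pos rfl]
            have hlast := he (m - 1) (by omega)
            have hmodm : (m - 1 + 1) % m = 0 := by
              rw [show m - 1 + 1 = m by omega, Nat.mod_self]
            rw [hmodm] at hlast
            rw [show k + s = m - 1 by omega]
            exact ⟨hlast.1, hlast.2.1, hlast.2.2.1, hlast.2.2.2⟩
          · have hmod : (s + 1) % (m - k) = s + 1 := Nat.mod_eq_of_lt (by omega)
            rw [hmod, if_neg (by omega : ¬ s + 1 = 0)]
            have hmodm : (k + s + 1) % m = k + s + 1 := Nat.mod_eq_of_lt (by omega)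
            rw [hmodm] at hed
            rw [show k + (s + 1) = k + s + 1 by omega]
            exact ⟨hed.1, hed.2.1, hed.2.2.1, hed.2.2.2⟩
  · by_cases hfn : (v 0, u k) ∈ FN
    · exact Finset.mem_union.2 (Or.inr hfn)
    · exfalso
      apply hmin (k + 1) (by omega) (by omega) v u
      refine ⟨?_, ?_, ?_⟩
      · intro s hs t ht hst
        exact hv s (by omega) t (by omega) hst
      · intro s hs t ht hst
        exact hu s (by omega) t (by omega) hst
      · intro s hs
        by_cases h1 : s = k
        · have hmod : (s + 1) % (k + 1) = 0 := by rw [h1, Nat.mod_self]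
          rw [hmod, h1]
          have hed := he k (by omega)
          exact ⟨hed.1, hed.2.1, hg, hfn⟩
        · have hmod : (s + 1) % (k + 1) = s + 1 := Nat.mod_eq_of_lt (by omega)
          have hmodm : (s + 1) % m = s + 1 := Nat.mod_eq_of_lt (by omega)
          have hed := he s (by omega)
          rw [hmodm] at hed
          rw [hmod]
          exact hed

end SwapAux

/-- let `ℓ ≥ 4`, suppose `F = FE ∪ FN` contains no cycle of length
`2ℓ`, and suppose there are at least two distinct `F`-fixed realisations of `S`.
Then every `F`-fixed realisation `G` admits a `j`-swap for some (even) `j` with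
`4 ≤ j ≤ 2ℓ - 2`: there is an `F`-fixed realisation `G'` obtained from `G` by
such a `j`-swap. -/
theorem stmt16 {n n' : ℕ} (a : Fin n → ℕ) (b : Fin n' → ℕ)
    (ℓ : ℕ) (hℓ : 4 ≤ ℓ)
    (FE FN : Finset (Fin n × Fin n')) (hdisj : Disjoint FE FN)
    (hF : ¬ HasCycleOfLength (FE ∪ FN) ℓ)
    (htwo : ∃ E₁ E₂ : Finset (Fin n × Fin n'),
      IsFFixedRealisation a b FE FN E₁ ∧ IsFFixedRealisation a b FE FN E₂ ∧ E₁ ≠ E₂)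
    (G : Finset (Fin n × Fin n')) (hG : IsFFixedRealisation a b FE FN G) :
    ∃ (G' : Finset (Fin n × Fin n')) (j : ℕ),
      IsFFixedRealisation a b FE FN G' ∧ j ≤ 2 * ℓ - 2 ∧ IsJSwap G G' j := by
  classical
  obtain ⟨hGr, hGFE, hGFN⟩ := hG
  obtain ⟨hGr1, hGr2⟩ := hGr
  obtain ⟨E₁, E₂, h1, h2, hne12⟩ := htwo
  obtain ⟨⟨h1r1, h1r2⟩, h1e, h1n⟩ := h1
  obtain ⟨⟨h2r1, h2r2⟩, h2e, h2n⟩ := h2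
  have hH : ∃ H : Finset (Fin n × Fin n'),
      ((∀ i : Fin n, (H.filter fun p => p.1 = i).card = a i) ∧
        (∀ j : Fin n', (H.filter fun p => p.2 = j).card = b j)) ∧
      FE ⊆ H ∧ FN ∩ H = ∅ ∧ H ≠ G := by
    by_cases hEG : E₁ = G
    · exact ⟨E₂, ⟨h2r1, h2r2⟩, h2e, h2n, fun hh => hne12 (by rw [hEG, hh])⟩
    · exact ⟨E₁, ⟨h1r1, h1r2⟩, h1e, h1n, hEG⟩
  obtain ⟨H, hHr, hHe, hHn, hHG⟩ := hH
  have hexgc : ∃ m, 2 ≤ m ∧ ∃ v u, GoodCycle G FE FN m v u := by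
    obtain ⟨m, v, u, hm, hgc⟩ :=
      exists_goodCycle ⟨hGr1, hGr2⟩ hHr hHe hHn (fun h => hHG h.symm)
    exact ⟨m, hm, v, u, hgc⟩
  set M := Nat.find hexgc with hMdef
  obtain ⟨hM2, v, u, hgc⟩ := Nat.find_spec hexgc
  have hmin : ∀ m', 2 ≤ m' → m' < M → ∀ v' u', ¬ GoodCycle G FE FN m' v' u' :=
    fun m' hm2 hlt v' u' hg' => Nat.find_min hexgc hlt ⟨hm2, v', u', hg'⟩
  by_cases hcase : M + 1 ≤ ℓ
  · obtain ⟨G', hG'r, hG'e, hG'n, hsd1, hsd2⟩ := good_swap ⟨hGr1, hGr2⟩ hGFE hGFN hM2 hgc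
    exact ⟨G', 2 * M, ⟨⟨hG'r.1, hG'r.2⟩, hG'e, hG'n⟩, by omega,
      M, rfl, hM2, v, u, hgc.1, hgc.2.1, hsd1, hsd2⟩
  · exfalso
    apply hF
    have hℓM : ℓ ≤ M := by omega
    obtain ⟨hv, hu, he⟩ := hgc
    have chordAll : ∀ s, s < M → ∀ k, 1 ≤ k → k ≤ M - 2 →
        (v s, u ((s + k) % M)) ∈ FE ∪ FN := by
      intro s hs k hk1 hk2
      have hrot := GoodCycle.rotate ⟨hv, hu, he⟩ s
      have hch := chord hrot hmin hk1 hk2 (by omega)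
      simpa only [← hMdef, zero_add, Nat.mod_eq_of_lt hs, Nat.add_comm k s] using hch
    refine ⟨fun s => v s, fun s => if s = ℓ - 1 then u 1 else u ((s + 2) % M), ?_, ?_, ?_⟩
    · intro s hs t ht hst
      exact hv s (by omega) t (by omega) hst
    · intro s hs t ht hst
      have hst' : (if s = ℓ - 1 then u 1 else u ((s + 2) % M))
          = (if t = ℓ - 1 then u 1 else u ((t + 2) % M)) := hst
      have hidx : ∀ w, w < ℓ - 1 → (w + 2) % M < M ∧ (w + 2) % M ≠ 1 ∧
          ((w + 2) % M = 0 → w + 2 = M) ∧ ((w + 2) % M ≠ 0 → (w + 2) % M = w + 2) := by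
        intro w hw
        rcases Nat.lt_or_ge (w + 2) M with h | h
        · rw [Nat.mod_eq_of_lt h]
          exact ⟨h, by omega, by omega, fun _ => rfl⟩
        · have hwM : w + 2 = M := by omega
          rw [hwM, Nat.mod_self]
          exact ⟨by omega, by omega, fun _ => rfl, fun h0 => absurd rfl h0⟩
      by_cases hc1 : s = ℓ - 1 <;> by_cases hc2 : t = ℓ - 1
      · omega
      · rw [if_pos hc1, if_neg hc2] at hst'
        exfalso
        have ht2 : t < ℓ - 1 := by omega
        have := hu 1 (by omega) ((t + 2) % M) (hidx t ht2).1 hst'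
        exact (hidx t ht2).2.1 this.symm
      · rw [if_neg hc1, if_pos hc2] at hst'
        exfalso
        have hs2 : s < ℓ - 1 := by omega
        have := hu ((s + 2) % M) (hidx s hs2).1 1 (by omega) hst'
        exact (hidx s hs2).2.1 this
      · rw [if_neg hc1, if_neg hc2] at hst'
        have hs2 : s < ℓ - 1 := by omega
        have ht2 : t < ℓ - 1 := by omega
        have heq := hu ((s + 2) % M) (hidx s hs2).1 ((t + 2) % M) (hidx t ht2).1 hst'
        by_cases hz : (s + 2) % M = 0
        · have e1 := (hidx s hs2).2.2.1 hz
          by_cases hz2 : (t + 2) % M = 0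
          · have e2 := (hidx t ht2).2.2.1 hz2; omega
          · have e2 := (hidx t ht2).2.2.2 hz2; omega
        · have e1 := (hidx s hs2).2.2.2 hz
          by_cases hz2 : (t + 2) % M = 0
          · have e2 := (hidx t ht2).2.2.1 hz2; omega
          · have e2 := (hidx t ht2).2.2.2 hz2; omega
    · intro s hs
      constructor
      · show (v s, if s = ℓ - 1 then u 1 else u ((s + 2) % M)) ∈ FE ∪ FN
        by_cases hc1 : s = ℓ - 1
        · rw [if_pos hc1, hc1]
          have key : (ℓ - 1 + (M - ℓ + 2)) % M = 1 := by
            rw [show ℓ - 1 + (M - ℓ + 2) = 1 + M by omega, Nat.add_mod_right,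
              Nat.mod_eq_of_lt (by omega)]
          have hch := chordAll (ℓ - 1) (by omega) (M - ℓ + 2) (by omega) (by omega)
          rw [key] at hch
          exact hch
        · rw [if_neg hc1]
          exact chordAll s (by omega) 2 (by omega) (by omega)
      · show (v ((s + 1) % ℓ), if s = ℓ - 1 then u 1 else u ((s + 2) % M)) ∈ FE ∪ FN
        by_cases hc1 : s = ℓ - 1
        · rw [if_pos hc1, hc1, show ℓ - 1 + 1 = ℓ by omega, Nat.mod_self]
          have key : (0 + 1) % M = 1 := by
            rw [show (0 : ℕ) + 1 = 1 by rfl, Nat.mod_eq_of_lt (by omega)]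
          have hch := chordAll 0 (by omega) 1 (by omega) (by omega)
          rw [key] at hch
          exact hch
        · rw [if_neg hc1]
          have hmod : (s + 1) % ℓ = s + 1 := Nat.mod_eq_of_lt (by omega)
          rw [hmod]
          have hch := chordAll (s + 1) (by omega) 1 (by omega) (by omega)
          rw [show s + 1 + 1 = s + 2 by omega] at hch
          exact hch
end
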